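/- arXiv:1907.07250 — 2 statements merged into one kernel-verified Lean document; each statement's English description precedes it below -/
import Mathlib

section
/- Let ε > 0 and let p : ℕ → (0, 1/2] be a function such that n·p(n)/log n → ∞ as n → ∞. If χ is a random (p(n), 1−p(n))-colouring of the hypercube Q_n, then with high probability χ is 3-distinguishable. -/
open MeasureTheory Filter Set Asymptotics Topology

noncomputable section

/-- Vertices of the `n`-dimensional hypercube. -/
abbrev V (n : ℕ) : Type := Fin n → Bool

/-- The hypercube graph `Q_n`. -/
def Q (n : ℕ) : SimpleGraph (V n) :=
  SimpleGraph.fromRel (fun u v => hammingDist u v = 1)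

/-- The neighbourhood of a vertex in `Q_n`. -/
def nbhd (n : ℕ) (v : V n) : Set (V n) := (Q n).neighborSet v

/-- The neighbourhood of a set of vertices. -/
def nbhdSet (n : ℕ) (A : Set (V n)) : Set (V n) := ⋃ v ∈ A, nbhd n v

/-- The set of vertices at graph distance exactly `k` from the set `A`. -/
def sphereSet (n k : ℕ) (A : Set (V n)) : Set (V n) :=
  {w | (∃ v ∈ A, (Q n).dist v w = k) ∧ ∀ v ∈ A, k ≤ (Q n).dist v w}

/-- The ball of radius `r` about `v` (as a set of vertices). -/
def ball (n : ℕ) (v : V n) (r : ℕ) : Set (V n) := {w | (Q n).dist v w ≤ r}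

/-- `χ^(r)(u) ≅ lam^(r)(w)` : the coloured `r`-balls around `u` (coloured by `χ`) and
`w` (coloured by `lam`) are isomorphic as coloured graphs. -/
def LocallyEq {C : Type} (n r : ℕ) (χ lam : V n → C) (u w : V n) : Prop :=
  ∃ φ : ((Q n).induce (ball n u r)) ≃g ((Q n).induce (ball n w r)),
    ∀ x : ball n u r, χ x.1 = lam ((φ x).1)

/-- `d(χ^(r)(u), lam^(r)(w)) ≤ m` : some isomorphism of the `r`-balls realises at most `m`
colour disagreements. -/
def BallDistLE {C : Type} (n r : ℕ) (χ lam : V n → C) (u w : V n) (m : ℝ) : Prop :=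
  ∃ φ : ((Q n).induce (ball n u r)) ≃g ((Q n).induce (ball n w r)),
    (({x : ball n u r | χ x.1 ≠ lam ((φ x).1)}.ncard : ℝ)) ≤ m

/-- A colouring is `r`-distinguishable if every `r`-locally equivalent colouring is obtained
from it by a graph automorphism. -/
def Distinguishable {C : Type} (n r : ℕ) (χ : V n → C) : Prop :=
  ∀ lam : V n → C,
    (∃ f : V n ≃ V n, ∀ v, LocallyEq n r χ lam v (f v)) →
    ∃ g : (Q n) ≃g (Q n), lam = fun v => χ (g.symm v)

/-- `Isom^(r)(χ)` : the set of bijections `f` with `χ^(r)(v) ≅ (χ ∘ f⁻¹)^(r)(f v)` for all `v`. -/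
def IsomSet {C : Type} (n r : ℕ) (χ : V n → C) : Set (V n ≃ V n) :=
  {f | ∀ v, LocallyEq n r χ (fun x => χ (f.symm x)) v (f v)}

/-- `Cluster^r_R` : bijections `h` such that `|Γ^r(h(Γ(v)))| ≤ binom(n, r+1) + R` for all `v`. -/
def ClusterSet (n r : ℕ) (R : ℝ) : Set (V n ≃ V n) :=
  {h | ∀ v, ((sphereSet n r (⇑h '' nbhd n v)).ncard : ℝ) ≤ (n.choose (r+1) : ℝ) + R}

/-- `g` is a dual of `f` (at level `s`): `|f(Γ(v)) ∩ Γ(g(v))| ≥ n − s` for all `v`. -/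
def IsDualF (n : ℕ) (s : ℝ) (f g : V n → V n) : Prop :=
  ∀ v, (n : ℝ) - s ≤ (((f '' nbhd n v) ∩ nbhd n (g v)).ncard : ℝ)

/-- `f` is `s`-approximately local: it has a dual at level `s`. -/
def ApproxLocalF (n : ℕ) (s : ℝ) (f : V n → V n) : Prop :=
  ∃ g : V n → V n, IsDualF n s f g

/-- `Local_s` : the set of `s`-approximately local bijections. -/
def LocalSet (n : ℕ) (s : ℝ) : Set (V n ≃ V n) :=
  {f | ApproxLocalF n s ⇑f}

/-- `Mono^t_s` : bijections in `Cluster¹_s` for which, for every `v`, at most one vertex `w`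
has `|f(Γ(v)) ∩ Γ(w)| > t`. -/
def MonoSet (n : ℕ) (s t : ℝ) : Set (V n ≃ V n) :=
  {f | f ∈ ClusterSet n 1 s ∧ ∀ v w₁ w₂ : V n,
      t < (((⇑f '' nbhd n v) ∩ nbhd n w₁).ncard : ℝ) →
      t < (((⇑f '' nbhd n v) ∩ nbhd n w₂).ncard : ℝ) → w₁ = w₂}

/-- The dual `f_⋆` of `f` : for each `v`, a vertex `w` maximising `|f(Γ(v)) ∩ Γ(w)|`
(which is the unique dual vertex whenever `f` is `s`-approximately local with `s < n/2`). -/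
def dualF (n : ℕ) (f : V n → V n) : V n → V n :=
  fun v => Classical.epsilon fun w =>
    ∀ w', ((f '' nbhd n v) ∩ nbhd n w').ncard ≤ ((f '' nbhd n v) ∩ nbhd n w).ncard

/-- The Bernoulli measure on `Bool`: `false` (colour 0) has probability `p`,
`true` (colour 1) has probability `1 - p`. -/
def bern (p : ℝ) : Measure Bool :=
  ENNReal.ofReal p • Measure.dirac false + ENNReal.ofReal (1 - p) • Measure.dirac true

/-- The law of a random `(p, 1-p)`-colouring of `Q_n`: i.i.d. Bernoulli colours. -/
def colMeasure (n : ℕ) (p : ℝ) : Measure (V n → Bool) :=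
  Measure.pi fun _ => bern p

/-- The uniform measure on `Fin q`. -/
def unifFin (q : ℕ) : Measure (Fin q) :=
  ((q : ENNReal))⁻¹ • Measure.count

/-- The law of a random `q`-colouring of `Q_n`: i.i.d. uniform colours. -/
def qColMeasure (n q : ℕ) : Measure (V n → Fin q) :=
  Measure.pi fun _ => unifFin q

namespace HC

variable {n : ℕ}

/-- Flip one coordinate. -/
def flip (x : V n) (i : Fin n) : V n := Function.update x i (!x i)

lemma flip_apply_same (x : V n) (i : Fin n) : flip x i i = !x i := by
  simp [flip]

lemma flip_apply_ne (x : V n) {i j : Fin n} (h : j ≠ i) : flip x i j = x j := by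
  simp [flip, Function.update_of_ne h]

/-- The difference support. -/
def dSupp (x y : V n) : Finset (Fin n) := Finset.univ.filter (fun i => x i ≠ y i)

lemma mem_dSupp {x y : V n} {i : Fin n} : i ∈ dSupp x y ↔ x i ≠ y i := by
  simp [dSupp]

lemma hamming_eq_card_dSupp (x y : V n) : hammingDist x y = (dSupp x y).card := rfl

lemma dSupp_flip_mem {x y : V n} {i : Fin n} (h : x i ≠ y i) :
    dSupp (flip x i) y = (dSupp x y).erase i := by
  ext j
  rcases eq_or_ne j i with rfl | hj
  · simp [mem_dSupp, flip_apply_same]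
    revert h; cases x j <;> cases y j <;> simp
  · simp [mem_dSupp, flip_apply_ne x hj, Finset.mem_erase, hj]

lemma dSupp_flip_not_mem {x y : V n} {i : Fin n} (h : x i = y i) :
    dSupp (flip x i) y = insert i (dSupp x y) := by
  ext j
  rcases eq_or_ne j i with rfl | hj
  · simp only [Finset.mem_insert, mem_dSupp, flip_apply_same]
    rw [h]; cases y j <;> simp
  · simp [mem_dSupp, flip_apply_ne x hj, hj]

lemma hamming_flip_lt {x y : V n} {i : Fin n} (h : x i ≠ y i) :
    hammingDist (flip x i) y + 1 = hammingDist x y := by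
  rw [hamming_eq_card_dSupp, hamming_eq_card_dSupp, dSupp_flip_mem h,
    Finset.card_erase_of_mem (mem_dSupp.2 h)]
  have : 0 < (dSupp x y).card := Finset.card_pos.2 ⟨i, mem_dSupp.2 h⟩
  omega

lemma hamming_flip_self (x : V n) (i : Fin n) : hammingDist x (flip x i) = 1 := by
  have : dSupp x (flip x i) = {i} := by
    ext j
    rcases eq_or_ne j i with rfl | hj
    · simp only [Finset.mem_singleton, mem_dSupp, flip_apply_same]
      cases x j <;> simp
    · simp [mem_dSupp, flip_apply_ne x hj, hj]
  rw [hamming_eq_card_dSupp, this, Finset.card_singleton]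

lemma adj_iff {x y : V n} : (Q n).Adj x y ↔ hammingDist x y = 1 := by
  rw [Q, SimpleGraph.fromRel_adj]
  constructor
  · rintro ⟨-, h | h⟩
    · exact h
    · rw [hammingDist_comm]; exact h
  · intro h
    exact ⟨by rw [← hammingDist_ne_zero]; omega, Or.inl h⟩

lemma adj_flip (x : V n) (i : Fin n) : (Q n).Adj x (flip x i) :=
  adj_iff.2 (hamming_flip_self x i)

/-- In any induced subgraph of the hypercube, walks are at least as long as Hamming distance. -/
lemma hamming_le_walk_length {S : Set (V n)} :
    ∀ {a b : S} (W : ((Q n).induce S).Walk a b), hammingDist a.1 b.1 ≤ W.length := by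
  intro a b W
  induction W with
  | nil => simp
  | @cons u v w h W ih =>
    have h1 : hammingDist u.1 v.1 = 1 := adj_iff.1 (by simpa using h)
    calc hammingDist u.1 w.1 ≤ hammingDist u.1 v.1 + hammingDist v.1 w.1 :=
          hammingDist_triangle _ _ _
      _ ≤ 1 + W.length := by rw [h1]; omega
      _ = (SimpleGraph.Walk.cons h W).length := by simp [Nat.add_comm]

/-- Geodesics within Hamming balls: a walk of length `hammingDist x y` staying in the ball. -/
lemma exists_walk_in_set {r : ℕ} {v : V n} {S : Set (V n)}
    (hS : ∀ z, z ∈ S ↔ hammingDist v z ≤ r) :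
    ∀ (h : ℕ) (x y : V n) (hx : x ∈ S) (hy : y ∈ S),
      hammingDist x y = h →
      ∃ W : ((Q n).induce S).Walk ⟨x, hx⟩ ⟨y, hy⟩, W.length = h := by
  intro h
  induction h with
  | zero =>
    intro x y hx hy hxy
    have : x = y := eq_of_hammingDist_eq_zero hxy
    subst this
    exact ⟨SimpleGraph.Walk.nil, rfl⟩
  | succ h ih =>
    intro x y hx hy hxy
    replace hx : hammingDist v x ≤ r := (hS x).1 hx
    have hy' : hammingDist v y ≤ r := (hS y).1 hy
    -- choose a coordinate to flip
    have hne : (dSupp x y).Nonempty := by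
      rw [← Finset.card_pos, ← hamming_eq_card_dSupp]; omega
    by_cases hcase : ∃ i ∈ dSupp x y, x i ≠ v i
    · obtain ⟨i, hi, hiv⟩ := hcase
      have hi' : x i ≠ y i := mem_dSupp.1 hi
      have hx' : flip x i ∈ S := (hS _).2 (by
        have : hammingDist (flip x i) v + 1 = hammingDist x v := hamming_flip_lt hiv
        rw [hammingDist_comm] at hx ⊢
        omega)
      have hxy' : hammingDist (flip x i) y = h := by
        have := hamming_flip_lt hi'
        omega
      obtain ⟨W, hW⟩ := ih (flip x i) y hx' hy hxy'
      have hadj : (SimpleGraph.induce S (Q n)).Adj ⟨x, ‹x ∈ S›⟩ ⟨flip x i, hx'⟩ := by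
        simpa using adj_flip x i
      exact ⟨SimpleGraph.Walk.cons hadj W, by rw [SimpleGraph.Walk.length_cons, hW]⟩
    · push_neg at hcase
      obtain ⟨i, hi⟩ := hne
      have hxvi : x i = v i := hcase i hi
      have hi' : x i ≠ y i := mem_dSupp.1 hi
      have hsub : dSupp v (flip x i) ⊆ dSupp v y := by
        intro j hj
        rw [mem_dSupp] at hj ⊢
        rcases eq_or_ne j i with rfl | hji
        · rw [hxvi] at hi'; exact hi'
        · rw [flip_apply_ne x hji] at hj
          by_cases hjd : x j = y j
          · intro hc; exact hj (by rw [hjd, ← hc])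
          · exact absurd (hcase j (mem_dSupp.2 hjd)).symm hj
      have hx' : flip x i ∈ S := (hS _).2 (by
        rw [hamming_eq_card_dSupp]
        rw [hamming_eq_card_dSupp] at hy'
        exact le_trans (Finset.card_le_card hsub) hy')
      have hxy' : hammingDist (flip x i) y = h := by
        have := hamming_flip_lt hi'
        omega
      obtain ⟨W, hW⟩ := ih (flip x i) y hx' hy hxy'
      have hadj : (SimpleGraph.induce S (Q n)).Adj ⟨x, ‹x ∈ S›⟩ ⟨flip x i, hx'⟩ := by
        simpa using adj_flip x i
      exact ⟨SimpleGraph.Walk.cons hadj W, by rw [SimpleGraph.Walk.length_cons, hW]⟩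

/-- The hypercube's graph distance is the Hamming distance. -/
lemma hamming_le_walk_length_Q :
    ∀ {x y : V n} (P : (Q n).Walk x y), hammingDist x y ≤ P.length := by
  intro x y P
  induction P with
  | nil => simp
  | @cons u v w h P ih =>
    have h1 : hammingDist u v = 1 := adj_iff.1 h
    calc hammingDist u w ≤ hammingDist u v + hammingDist v w := hammingDist_triangle _ _ _
      _ ≤ 1 + P.length := by rw [h1]; omega
      _ = (SimpleGraph.Walk.cons h P).length := by simp [Nat.add_comm]

lemma dist_eq_hamming (x y : V n) : (Q n).dist x y = hammingDist x y := by
  have hS : ∀ z : V n, z ∈ (Set.univ : Set (V n)) ↔ hammingDist x z ≤ n := by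
    intro z
    simp only [Set.mem_univ, true_iff]
    simpa using (hammingDist_le_card_fintype (x := x) (y := z))
  obtain ⟨W, hW⟩ := exists_walk_in_set hS (hammingDist x y) x y trivial trivial rfl
  let P : (Q n).Walk x y :=
    W.map ⟨Subtype.val, fun {a b} h => by simpa using h⟩
  have hle : (Q n).dist x y ≤ hammingDist x y := by
    have := SimpleGraph.dist_le P
    rwa [show P.length = W.length from SimpleGraph.Walk.length_map _ W, hW] at this
  obtain ⟨P', hP'⟩ := SimpleGraph.Reachable.exists_walk_length_eq_dist ⟨P⟩
  have hge : hammingDist x y ≤ (Q n).dist x y := by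
    rw [← hP']
    exact hamming_le_walk_length_Q P'
  omega

lemma mem_ball {v x : V n} {r : ℕ} : x ∈ ball n v r ↔ hammingDist v x ≤ r := by
  simp [ball, dist_eq_hamming]

/-- Graph isomorphisms of balls preserve Hamming distance. -/
lemma iso_ham {u w : V n} {r : ℕ}
    (φ : ((Q n).induce (ball n u r)) ≃g ((Q n).induce (ball n w r))) :
    ∀ x y : ball n u r, hammingDist ((φ x) : V n) ((φ y) : V n) = hammingDist (x : V n) (y : V n) := by
  have key : ∀ (a b : V n) (s : Set (V n)) (t : Set (V n)) (hs : ∀ z, z ∈ s ↔ hammingDist a z ≤ r)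
      (ht : ∀ z, z ∈ t ↔ hammingDist b z ≤ r)
      (ψ : ((Q n).induce s) ≃g ((Q n).induce t)) (x y : s),
      hammingDist ((ψ x) : V n) ((ψ y) : V n) ≤ hammingDist (x : V n) (y : V n) := by
    intro a b s t hs ht ψ x y
    obtain ⟨W, hW⟩ := exists_walk_in_set hs (hammingDist (x : V n) (y : V n)) x y x.2 y.2 rfl
    have hxx : (⟨(x : V n), x.2⟩ : s) = x := rfl
    rw [← hW]
    have := hamming_le_walk_length ((W.map ψ.toHom))
    rwa [SimpleGraph.Walk.length_map] at this
  intro x y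
  have h1 := key u w _ _ (fun z => mem_ball) (fun z => mem_ball) φ x y
  have h2 := key w u _ _ (fun z => mem_ball) (fun z => mem_ball) φ.symm (φ x) (φ y)
  rw [RelIso.symm_apply_apply, RelIso.symm_apply_apply] at h2
  omega

/-- Flip a set of coordinates. -/
def flipSet (x : V n) (S : Finset (Fin n)) : V n := fun j => if j ∈ S then !x j else x j

lemma dSupp_flipSet (x : V n) (S : Finset (Fin n)) : dSupp x (flipSet x S) = S := by
  ext j
  simp only [mem_dSupp, flipSet]
  by_cases h : j ∈ S
  · simp only [if_pos h, h, iff_true]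
    cases x j <;> simp
  · simp [if_neg h, h]

/-- The centre of a Hamming ball of radius `r ≤ n/2` is the unique point within distance `r`
of every point of the ball. -/
lemma center_unique {r : ℕ} (hrn : 2 * r ≤ n) {w x : V n}
    (hx : hammingDist w x ≤ r) (hmax : ∀ y, hammingDist w y ≤ r → hammingDist x y ≤ r) :
    x = w := by
  by_contra hne
  set D := dSupp x w with hD
  have hDpos : 0 < D.card := by
    rw [Finset.card_pos]
    obtain ⟨i, hi⟩ : ∃ i, x i ≠ w i := by
      by_contra hc
      push_neg at hc
      exact hne (funext hc)
    exact ⟨i, mem_dSupp.2 hi⟩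
  have hDr : D.card ≤ r := by
    rw [hD, ← hamming_eq_card_dSupp, hammingDist_comm]
    exact hx
  have hcompl : r ≤ (Finset.univ \ D).card := by
    rw [Finset.card_sdiff_of_subset (Finset.subset_univ D), Finset.card_univ]
    simp only [Fintype.card_fin]
    omega
  obtain ⟨S, hSsub, hScard⟩ := Finset.exists_subset_card_eq hcompl
  set y := flipSet w S with hy
  have hwy : hammingDist w y = r := by
    rw [hamming_eq_card_dSupp, hy, dSupp_flipSet, hScard]
  have hxy : hammingDist x y = D.card + r := by
    rw [hamming_eq_card_dSupp]
    have : dSupp x y = D ∪ S := by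
      ext j
      by_cases hjS : j ∈ S
      · have hjD : j ∉ D := fun hc => (Finset.mem_sdiff.1 (hSsub hjS)).2 hc
        have : x j = w j := by
          by_contra hc
          exact hjD (mem_dSupp.2 hc)
        simp only [mem_dSupp, Finset.mem_union, hy, flipSet, if_pos hjS, this, hjS, or_true,
          iff_true]
        cases w j <;> simp
      · have : y j = w j := by simp [hy, flipSet, hjS]
        simp only [mem_dSupp, this, Finset.mem_union, hjS, or_false]
        exact ⟨fun h => mem_dSupp.2 h, fun h => mem_dSupp.1 h⟩
    rw [this, Finset.card_union_of_disjoint, hScard]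
    refine Finset.disjoint_left.2 (fun j hjD hjS => ?_)
    exact absurd hjD (Finset.mem_sdiff.1 (hSsub hjS)).2
  have := hmax y (le_of_eq hwy)
  omega

lemma bool_ne_iff {a b : Bool} : a ≠ b ↔ b = !a := by cases a <;> cases b <;> simp

lemma exists_eq_flip {w z : V n} (h : hammingDist w z = 1) : ∃ i, z = flip w i := by
  rw [hamming_eq_card_dSupp, Finset.card_eq_one] at h
  obtain ⟨i, hi⟩ := h
  refine ⟨i, funext fun j => ?_⟩
  rcases eq_or_ne j i with rfl | hj
  · have : j ∈ dSupp w z := hi ▸ Finset.mem_singleton_self j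
    rw [flip_apply_same]
    exact bool_ne_iff.1 (mem_dSupp.1 this)
  · have : j ∉ dSupp w z := fun hc => hj (Finset.mem_singleton.1 (hi ▸ hc))
    rw [flip_apply_ne w hj]
    by_contra hc
    exact this (mem_dSupp.2 fun hd => hc hd.symm)

lemma flip_apply (x : V n) (i j : Fin n) : flip x i j = if j = i then !x i else x j :=
  Function.update_apply ..

lemma flip_index_inj {u : V n} {i j : Fin n} (h : flip u i = flip u j) : i = j := by
  by_contra hij
  have h1 : flip u i i = flip u j i := by rw [h]
  rw [flip_apply_same, flip_apply_ne u (fun hc => hij hc)] at h1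
  cases u i <;> simp_all

lemma flip_comm {u : V n} {i j : Fin n} (hij : i ≠ j) :
    flip (flip u i) j = flip (flip u j) i := by
  funext k
  by_cases hkj : k = j <;> by_cases hki : k = i <;>
    simp_all [flip_apply] <;> simp_all [Ne.symm hij, hij]

lemma flip_flip_apply_fst {u : V n} {i j : Fin n} (hij : i ≠ j) :
    flip (flip u i) j i = !u i := by
  simp [flip_apply, hij, Ne.symm hij]

lemma flip_flip_apply_snd {u : V n} {i j : Fin n} :
    flip (flip u i) j j = !(flip u i) j := flip_apply_same _ _

lemma dSupp_flip_flip {u : V n} {i j : Fin n} (hij : i ≠ j) :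
    dSupp u (flip (flip u i) j) = {i, j} := by
  ext k
  rcases eq_or_ne k i with rfl | hki
  · simp only [mem_dSupp, flip_flip_apply_fst hij, Finset.mem_insert, Finset.mem_singleton]
    cases u k <;> simp
  · rcases eq_or_ne k j with rfl | hkj
    · simp only [mem_dSupp, flip_apply_same, flip_apply_ne u hij.symm, Finset.mem_insert,
        Finset.mem_singleton]
      cases u k <;> simp [hki]
    · simp only [mem_dSupp, flip_apply_ne _ hkj, flip_apply_ne u hki, Finset.mem_insert,
        Finset.mem_singleton, hki, hkj, or_self]
      simp

lemma hamming_flip_flip {u : V n} {i j : Fin n} (hij : i ≠ j) :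
    hammingDist u (flip (flip u i) j) = 2 := by
  rw [hamming_eq_card_dSupp, dSupp_flip_flip hij, Finset.card_insert_of_notMem (by simp [hij]),
    Finset.card_singleton]

lemma sphere2_eq {w z : V n} {a b : Fin n} (hab : a ≠ b) (h2 : hammingDist w z = 2)
    (ha : hammingDist (flip w a) z = 1) (hb : hammingDist (flip w b) z = 1) :
    z = flip (flip w a) b := by
  have hmem : ∀ c : Fin n, hammingDist (flip w c) z = 1 → c ∈ dSupp w z := by
    intro c hc
    by_contra hcm
    have hwc : w c = z c := by
      by_contra h'
      exact hcm (mem_dSupp.2 h')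
    have := dSupp_flip_not_mem (x := w) (y := z) (i := c) hwc
    rw [hamming_eq_card_dSupp, this, Finset.card_insert_of_notMem hcm] at hc
    rw [hamming_eq_card_dSupp] at h2
    omega
  have hD : dSupp w z = {a, b} := by
    refine (Finset.eq_of_subset_of_card_le ?_ ?_).symm
    · intro c hc
      rcases Finset.mem_insert.1 hc with rfl | hc'
      · exact hmem c ha
      · rw [Finset.mem_singleton.1 hc']
        exact hmem b hb
    · rw [← hamming_eq_card_dSupp, h2]
      rw [Finset.card_insert_of_notMem (by simp [hab]), Finset.card_singleton]
  funext k
  rcases eq_or_ne k a with rfl | hka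
  · rw [flip_flip_apply_fst hab]
    have : k ∈ dSupp w z := hD ▸ by simp
    exact (bool_ne_iff.1 (mem_dSupp.1 this)).symm ▸ rfl
  · rcases eq_or_ne k b with rfl | hkb
    · rw [flip_apply_same, flip_apply_ne w hab.symm]
      have : k ∈ dSupp w z := hD ▸ by simp
      exact (bool_ne_iff.1 (mem_dSupp.1 this)).symm ▸ rfl
    · rw [flip_apply_ne _ hkb, flip_apply_ne w hka]
      have : k ∉ dSupp w z := by
        rw [hD]
        simp [hka, hkb]
      by_contra hc
      exact this (mem_dSupp.2 fun hd => hc hd.symm)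

/-- An abstract colour/distance-preserving correspondence of `2`-balls. -/
structure IsGood (n : ℕ) (χ lam : V n → Bool) (u w : V n) (F : V n → V n) : Prop where
  maps : ∀ x, hammingDist u x ≤ 2 → hammingDist w (F x) ≤ 2
  surj : ∀ y, hammingDist w y ≤ 2 → ∃ x, hammingDist u x ≤ 2 ∧ F x = y
  dist : ∀ x y, hammingDist u x ≤ 2 → hammingDist u y ≤ 2 →
    hammingDist (F x) (F y) = hammingDist x y
  col : ∀ x, hammingDist u x ≤ 2 → χ x = lam (F x)

lemma IsGood.center {χ lam : V n → Bool} {u w : V n} {F : V n → V n}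
    (h : IsGood n χ lam u w F) (hn : 4 ≤ n) : F u = w := by
  refine center_unique (r := 2) (by omega) (h.maps u (by simp)) (fun y hy => ?_)
  obtain ⟨x, hx, rfl⟩ := h.surj y hy
  rw [h.dist u x (by simp) hx]
  calc hammingDist u x ≤ hammingDist u u + hammingDist u x := by omega
    _ ≤ 2 := by rw [hammingDist_self]; omega

/-- Existence of a permutation matching second spheres with colours. -/
def PairData (n : ℕ) (χ lam : V n → Bool) (u w : V n) : Prop :=
  ∃ σ : Equiv.Perm (Fin n), ∀ i j, i ≠ j →
    χ (flip (flip u i) j) = lam (flip (flip w (σ i)) (σ j))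

lemma IsGood.pairData {χ lam : V n → Bool} {u w : V n} {F : V n → V n}
    (h : IsGood n χ lam u w F) (hn : 4 ≤ n) : PairData n χ lam u w := by
  have hc : F u = w := h.center hn
  have hball1 : ∀ i : Fin n, hammingDist u (flip u i) ≤ 2 := by
    intro i; rw [hamming_flip_self]; omega
  have h1 : ∀ i : Fin n, hammingDist w (F (flip u i)) = 1 := by
    intro i
    rw [← hc, h.dist u (flip u i) (by simp) (hball1 i), hamming_flip_self]
  have hτ : ∀ i : Fin n, ∃ k, F (flip u i) = flip w k := fun i => exists_eq_flip (h1 i)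
  classical
  choose τ hτspec using hτ
  have hinj : Function.Injective τ := by
    intro i j hij
    have : F (flip u i) = F (flip u j) := by rw [hτspec i, hτspec j, hij]
    have h0 : hammingDist (flip u i) (flip u j) = 0 := by
      rw [← h.dist (flip u i) (flip u j) (hball1 i) (hball1 j), this, hammingDist_self]
    exact flip_index_inj (eq_of_hammingDist_eq_zero h0)
  refine ⟨Equiv.ofBijective τ ((Fintype.bijective_iff_injective_and_card τ).2 ⟨hinj, rfl⟩), ?_⟩
  intro i j hij
  have hσ : ∀ k, (Equiv.ofBijective τ ((Fintype.bijective_iff_injective_and_card τ).2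
      ⟨hinj, rfl⟩)) k = τ k := fun k => rfl
  rw [hσ, hσ]
  have hball2 : hammingDist u (flip (flip u i) j) ≤ 2 := le_of_eq (hamming_flip_flip hij)
  set z := F (flip (flip u i) j) with hz
  have h2 : hammingDist w z = 2 := by
    rw [hz, ← hc, h.dist u _ (by simp) hball2, hamming_flip_flip hij]
  have ha : hammingDist (flip w (τ i)) z = 1 := by
    rw [← hτspec i, hz, h.dist _ _ (hball1 i) hball2, hamming_flip_self]
  have hb : hammingDist (flip w (τ j)) z = 1 := by
    rw [← hτspec j, hz, h.dist _ _ (hball1 j) hball2, flip_comm hij, hamming_flip_self]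
  have hzz : z = flip (flip w (τ i)) (τ j) :=
    sphere2_eq (fun hc' => hij (hinj hc')) h2 ha hb
  rw [← hzz, hz]
  exact h.col _ hball2

/-- The good event: no two distinct vertices have `σ`-matching colour patterns on their
second spheres. -/
def Egood (n : ℕ) (χ : V n → Bool) : Prop :=
  ∀ u u' : V n, u ≠ u' → ∀ σ : Equiv.Perm (Fin n), ∃ i j, i ≠ j ∧
    χ (flip (flip u i) j) ≠ χ (flip (flip u' (σ i)) (σ j))

theorem distinguishable_of_Egood {n : ℕ} (hn : 10 ≤ n) {χ : V n → Bool} (hE : Egood n χ) :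
    Distinguishable n 3 χ := by
  intro lam hlam
  obtain ⟨f, hf⟩ := hlam
  classical
  choose Φ hΦ using hf
  set Fv : V n → V n → V n := fun v x =>
    if hx : x ∈ ball n v 3 then ((Φ v) ⟨x, hx⟩ : V n) else x with hFv
  have K1 : ∀ v x (hx : x ∈ ball n v 3), Fv v x = ((Φ v) ⟨x, hx⟩ : V n) := by
    intro v x hx
    simp only [hFv, dif_pos hx]
  have K2 : ∀ v x y (hx : x ∈ ball n v 3) (hy : y ∈ ball n v 3),
      hammingDist (Fv v x) (Fv v y) = hammingDist x y := by
    intro v x y hx hy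
    rw [K1 v x hx, K1 v y hy]
    exact iso_ham (Φ v) ⟨x, hx⟩ ⟨y, hy⟩
  have K3 : ∀ v x (hx : x ∈ ball n v 3), Fv v x ∈ ball n (f v) 3 := by
    intro v x hx
    rw [K1 v x hx]
    exact ((Φ v) ⟨x, hx⟩).2
  have K4 : ∀ v y (_ : y ∈ ball n (f v) 3), ∃ x, ∃ hx : x ∈ ball n v 3, Fv v x = y := by
    intro v y hy
    refine ⟨((Φ v).symm ⟨y, hy⟩ : V n), ((Φ v).symm ⟨y, hy⟩).2, ?_⟩
    rw [K1 v _ ((Φ v).symm ⟨y, hy⟩).2]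
    have : (⟨((Φ v).symm ⟨y, hy⟩ : V n), ((Φ v).symm ⟨y, hy⟩).2⟩ : ball n v 3)
        = (Φ v).symm ⟨y, hy⟩ := rfl
    rw [this, RelIso.apply_symm_apply]
  have K5 : ∀ v x (hx : x ∈ ball n v 3), χ x = lam (Fv v x) := by
    intro v x hx
    rw [K1 v x hx]
    exact hΦ v ⟨x, hx⟩
  have memball : ∀ (v x : V n) (r : ℕ), hammingDist v x ≤ r → x ∈ ball n v r := by
    intro v x r h
    exact mem_ball.2 h
  have K6 : ∀ v, Fv v v = f v := by
    intro v
    have hself : v ∈ ball n v 3 := memball v v 3 (by simp)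
    refine center_unique (r := 3) (by omega) (mem_ball.1 (K3 v v hself)) (fun y hy => ?_)
    obtain ⟨x, hx, rfl⟩ := K4 v y (memball _ _ _ hy)
    rw [K2 v v x hself hx]
    exact mem_ball.1 hx
  -- Claim A
  have A : ∀ v u, hammingDist v u ≤ 1 → IsGood n χ lam u (Fv v u) (Fv v) := by
    intro v u hvu
    have hmem : ∀ x, hammingDist u x ≤ 2 → x ∈ ball n v 3 := by
      intro x hx
      refine memball v x 3 ?_
      calc hammingDist v x ≤ hammingDist v u + hammingDist u x := hammingDist_triangle _ _ _
        _ ≤ 3 := by omega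
    have humem : u ∈ ball n v 3 := hmem u (by simp)
    refine ⟨?_, ?_, ?_, ?_⟩
    · intro x hx
      rw [K2 v u x humem (hmem x hx)]
      exact hx
    · intro y hy
      have hyball : y ∈ ball n (f v) 3 := by
        refine memball _ _ _ ?_
        have h1 : hammingDist (f v) (Fv v u) ≤ 1 := by
          rw [← K6 v, K2 v v u (memball v v 3 (by simp)) humem]
          exact hvu
        calc hammingDist (f v) y ≤ hammingDist (f v) (Fv v u) + hammingDist (Fv v u) y :=
            hammingDist_triangle _ _ _
          _ ≤ 3 := by omega
      obtain ⟨x, hx, rfl⟩ := K4 v y hyball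
      refine ⟨x, ?_, rfl⟩
      rw [← K2 v u x humem hx]
      exact hy
    · intro x y hx hy
      exact K2 v x y (hmem x hx) (hmem y hy)
    · intro x hx
      exact K5 v x (hmem x hx)
  -- Claim B
  have B : ∀ v u, hammingDist v u ≤ 1 → Fv v u = f u := by
    intro v u hvu
    set w := Fv v u with hw
    have hG1 : IsGood n χ lam u w (Fv v) := A v u hvu
    set u' := f.symm w with hu'
    have hfu' : f u' = w := f.apply_symm_apply w
    have hG2 : IsGood n χ lam u' w (Fv u') := by
      have := A u' u' (by simp)
      rwa [K6 u', hfu'] at this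
    by_contra hne
    have hune : u ≠ u' := by
      intro hc
      apply hne
      have h2 : f u = w := by rw [hc]; exact hfu'
      rw [h2]
    obtain ⟨σ₁, hσ₁⟩ := hG1.pairData (by omega)
    obtain ⟨σ₂, hσ₂⟩ := hG2.pairData (by omega)
    obtain ⟨i, j, hij, hcol⟩ := hE u u' hune (σ₁.trans σ₂.symm)
    apply hcol
    have e1 := hσ₁ i j hij
    have e2 := hσ₂ ((σ₁.trans σ₂.symm) i) ((σ₁.trans σ₂.symm) j)
      (fun hc => hij (by simpa using (σ₁.trans σ₂.symm).injective hc))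
    rw [e1, e2]
    simp only [Equiv.trans_apply, Equiv.apply_symm_apply]
  -- consequences
  have C1 : ∀ u v : V n, (Q n).Adj u v → (Q n).Adj (f u) (f v) := by
    intro u v hadj
    have h1 : hammingDist u v = 1 := adj_iff.1 hadj
    have hvu : hammingDist v u ≤ 1 := by rw [hammingDist_comm]; omega
    have hfu : f u = Fv v u := (B v u hvu).symm
    have hfv : f v = Fv v v := by rw [K6 v]
    rw [adj_iff, hfu, hfv, K2 v u v (memball v u 3 (by omega)) (memball v v 3 (by simp))]
    exact h1
  have C2 : ∀ v : V n, χ v = lam (f v) := by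
    intro v
    rw [← K6 v]
    exact K5 v v (memball v v 3 (by simp))
  -- edge counting for the converse direction
  have himg : (Q n).edgeFinset.image (Sym2.map f) = (Q n).edgeFinset := by
    apply Finset.eq_of_subset_of_card_le
    · intro e he
      obtain ⟨e', he', rfl⟩ := Finset.mem_image.1 he
      induction e' with
      | _ a b =>
        rw [SimpleGraph.mem_edgeFinset, Sym2.map_pair_eq, SimpleGraph.mem_edgeSet]
        exact C1 a b (((Q n).mem_edgeSet).1 (SimpleGraph.mem_edgeFinset.1 he'))
    · rw [Finset.card_image_of_injective _ (Sym2.map.injective f.injective)]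
  have C3 : ∀ u v : V n, (Q n).Adj (f u) (f v) → (Q n).Adj u v := by
    intro u v hadj
    have hmem : s(f u, f v) ∈ (Q n).edgeFinset := SimpleGraph.mem_edgeFinset.2 hadj
    rw [← himg] at hmem
    obtain ⟨e', he', heq⟩ := Finset.mem_image.1 hmem
    induction e' with
    | _ a b =>
      rw [Sym2.map_pair_eq, Sym2.eq_iff] at heq
      have hab : (Q n).Adj a b := ((Q n).mem_edgeSet).1 (SimpleGraph.mem_edgeFinset.1 he')
      rcases heq with ⟨h1, h2⟩ | ⟨h1, h2⟩
      · rwa [f.injective h1, f.injective h2] at hab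
      · rw [f.injective h1, f.injective h2] at hab
        exact hab.symm
  refine ⟨⟨f, fun {a b} => ⟨C3 a b, C1 a b⟩⟩, ?_⟩
  funext y
  have h1 : ((⟨f, fun {a b} => ⟨C3 a b, C1 a b⟩⟩ : (Q n) ≃g (Q n)).symm y : V n) = f.symm y := rfl
  rw [h1]
  have := C2 (f.symm y)
  rw [f.apply_symm_apply] at this
  exact this.symm

/-! ### Probability estimates -/

section Prob

variable {p : ℝ}

/-- The weight of a colour. -/
def wgt (p : ℝ) : Bool → ENNReal := fun b => if b then ENNReal.ofReal (1 - p) else ENNReal.ofReal p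

lemma bern_singleton (p : ℝ) (b : Bool) : bern p {b} = wgt p b := by
  cases b <;>
  · rw [bern, Measure.add_apply, Measure.smul_apply, Measure.smul_apply,
      Measure.dirac_apply' _ (MeasurableSet.singleton _),
      Measure.dirac_apply' _ (MeasurableSet.singleton _)]
    simp [Set.indicator_apply, wgt]

lemma bern_probability (hp0 : 0 ≤ p) (hp1 : p ≤ 1) : IsProbabilityMeasure (bern p) := by
  constructor
  have : (Set.univ : Set Bool) = {false} ∪ {true} := by
    ext b; cases b <;> simp
  rw [this, measure_union (by simp) (MeasurableSet.singleton _), bern_singleton, bern_singleton]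
  simp only [wgt, if_pos, if_neg Bool.false_ne_true]
  rw [← ENNReal.ofReal_add (by linarith) (by linarith)]
  norm_num

instance bern_finite : IsFiniteMeasure (bern p) := by
  constructor
  have : (Set.univ : Set Bool) = {false} ∪ {true} := by
    ext b; cases b <;> simp
  rw [this, measure_union (by simp) (MeasurableSet.singleton _), bern_singleton, bern_singleton]
  simp only [wgt, if_pos, if_neg Bool.false_ne_true]
  exact ENNReal.add_lt_top.2 ⟨ENNReal.ofReal_lt_top, ENNReal.ofReal_lt_top⟩

lemma colMeasure_probability (n : ℕ) (hp0 : 0 ≤ p) (hp1 : p ≤ 1) :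
    IsProbabilityMeasure (colMeasure n p) := by
  haveI := bern_probability hp0 hp1
  exact MeasureTheory.Measure.pi.instIsProbabilityMeasure _

lemma meas_all {n : ℕ} (s : Set (V n → Bool)) : MeasurableSet s := by
  have hsing : ∀ χ₀ : V n → Bool, MeasurableSet ({χ₀} : Set (V n → Bool)) := by
    intro χ₀
    have : ({χ₀} : Set (V n → Bool)) = ⋂ v, (fun χ : V n → Bool => χ v) ⁻¹' {χ₀ v} := by
      ext χ
      simp [funext_iff]
    rw [this]
    exact MeasurableSet.iInter fun v => (measurable_pi_apply v) (MeasurableSet.singleton _)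
  have : s = ⋃ χ ∈ s, {χ} := by simp
  rw [this]
  exact MeasurableSet.biUnion (Set.to_countable s) (fun χ _ => hsing χ)

lemma colMeasure_singleton (n : ℕ) (χ₀ : V n → Bool) :
    colMeasure n p {χ₀} = ∏ v : V n, wgt p (χ₀ v) := by
  have : ({χ₀} : Set (V n → Bool)) = Set.pi Set.univ (fun v => ({χ₀ v} : Set Bool)) := by
    ext χ
    simp [Set.mem_pi, funext_iff]
  rw [colMeasure, this, MeasureTheory.Measure.pi_pi]
  exact Finset.prod_congr rfl fun v _ => bern_singleton p (χ₀ v)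

lemma colMeasure_eq_sum (n : ℕ) (S : Set (V n → Bool)) :
    colMeasure n p S = ∑ χ ∈ (Set.toFinite S).toFinset, ∏ v : V n, wgt p (χ v) := by
  have h1 : S = ⋃ χ ∈ (Set.toFinite S).toFinset, ({χ} : Set (V n → Bool)) := by
    simp [Set.Finite.coe_toFinset]
  conv_lhs => rw [h1]
  rw [measure_biUnion_finset ?hd (fun b _ => meas_all _)]
  · exact Finset.sum_congr rfl fun χ _ => colMeasure_singleton n χ
  · intro x _ y _ hxy
    simp [Function.onFun, Set.disjoint_singleton, hxy]

/-- Flipping one coordinate. -/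
def flipCol {n : ℕ} (a : V n) (χ : V n → Bool) : V n → Bool := Function.update χ a (!χ a)

lemma flipCol_apply_same {n : ℕ} (a : V n) (χ : V n → Bool) : flipCol a χ a = !χ a := by
  simp [flipCol]

lemma flipCol_apply_ne {n : ℕ} (a : V n) (χ : V n → Bool) {v : V n} (h : v ≠ a) :
    flipCol a χ v = χ v := by
  simp [flipCol, Function.update_of_ne h]

lemma flipCol_injective {n : ℕ} (a : V n) : Function.Injective (flipCol a) := by
  intro χ χ' h
  funext v
  rcases eq_or_ne v a with rfl | hv
  · have := congrFun h v
    rw [flipCol_apply_same, flipCol_apply_same] at this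
    simpa using congrArg (fun b => !b) this
  · have := congrFun h v
    rwa [flipCol_apply_ne _ _ hv, flipCol_apply_ne _ _ hv] at this

/-- Key conditioning step: if `A` is invariant under flipping the colour at `a`, then
the additional constraint `χ a = χ b` costs a factor `1 - p`. -/
lemma measure_constraint_le {n : ℕ} (hp0 : 0 < p) (hp2 : p ≤ 1 / 2)
    (A : Set (V n → Bool)) (a b : V n) (hab : a ≠ b)
    (hinv : ∀ χ ∈ A, flipCol a χ ∈ A) :
    colMeasure n p (A ∩ {χ | χ a = χ b}) ≤ ENNReal.ofReal (1 - p) * colMeasure n p A := by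
  set B : Set (V n → Bool) := {χ | χ a = χ b} with hB
  have key : ENNReal.ofReal p * colMeasure n p (A ∩ B) ≤
      ENNReal.ofReal (1 - p) * colMeasure n p (A ∩ Bᶜ) := by
    rw [colMeasure_eq_sum n (A ∩ B), colMeasure_eq_sum n (A ∩ Bᶜ), Finset.mul_sum,
      Finset.mul_sum]
    have himg : ∀ χ ∈ (Set.toFinite (A ∩ B)).toFinset, flipCol a χ ∈
        (Set.toFinite (A ∩ Bᶜ)).toFinset := by
      intro χ hχ
      rw [Set.Finite.mem_toFinset] at hχ ⊢
      refine ⟨hinv χ hχ.1, ?_⟩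
      have hb : flipCol a χ b = χ b := flipCol_apply_ne _ _ (Ne.symm hab)
      have ha : flipCol a χ a = !χ a := flipCol_apply_same _ _
      have hχab : χ a = χ b := hχ.2
      simp only [Set.mem_compl_iff, hB, Set.mem_setOf_eq, ha, hb, ← hχab]
      cases χ a <;> simp
    calc ∑ χ ∈ (Set.toFinite (A ∩ B)).toFinset, ENNReal.ofReal p * ∏ v : V n, wgt p (χ v)
        ≤ ∑ χ ∈ (Set.toFinite (A ∩ B)).toFinset,
            ENNReal.ofReal (1 - p) * ∏ v : V n, wgt p (flipCol a χ v) := by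
          refine Finset.sum_le_sum fun χ _ => ?_
          rw [← Finset.mul_prod_erase Finset.univ _ (Finset.mem_univ a),
            ← Finset.mul_prod_erase Finset.univ (fun v => wgt p (flipCol a χ v))
              (Finset.mem_univ a)]
          have herase : ∏ v ∈ Finset.univ.erase a, wgt p (flipCol a χ v) =
              ∏ v ∈ Finset.univ.erase a, wgt p (χ v) := by
            refine Finset.prod_congr rfl fun v hv => ?_
            rw [flipCol_apply_ne _ _ (Finset.mem_erase.1 hv).1]
          rw [herase, flipCol_apply_same, ← mul_assoc, ← mul_assoc]
          refine mul_le_mul' ?_ le_rfl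
          cases hca : χ a
          · simp only [wgt, Bool.not_false, if_neg Bool.false_ne_true, if_pos]
            rw [← ENNReal.ofReal_mul (le_of_lt hp0), ← ENNReal.ofReal_mul (by linarith)]
            exact ENNReal.ofReal_le_ofReal (by nlinarith)
          · simp only [wgt, Bool.not_true, if_pos, if_neg Bool.false_ne_true]
            rw [← ENNReal.ofReal_mul (le_of_lt hp0), ← ENNReal.ofReal_mul (by linarith)]
            exact ENNReal.ofReal_le_ofReal (by nlinarith)
      _ = ∑ χ ∈ (Set.toFinite (A ∩ B)).toFinset.image (flipCol a),
            ENNReal.ofReal (1 - p) * ∏ v : V n, wgt p (χ v) := by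
          rw [Finset.sum_image (fun x _ y _ h => flipCol_injective a h)]
      _ ≤ ∑ χ ∈ (Set.toFinite (A ∩ Bᶜ)).toFinset,
            ENNReal.ofReal (1 - p) * ∏ v : V n, wgt p (χ v) := by
          refine Finset.sum_le_sum_of_subset ?_
          intro χ hχ
          obtain ⟨χ', hχ', rfl⟩ := Finset.mem_image.1 hχ
          exact himg χ' hχ'
  have hsplit : colMeasure n p (A ∩ B) + colMeasure n p (A ∩ Bᶜ) = colMeasure n p A := by
    rw [← measure_union ?hd (meas_all _)]
    · congr 1
      rw [← Set.inter_union_distrib_left, Set.union_compl_self, Set.inter_univ]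
    · exact Set.disjoint_of_subset (Set.inter_subset_right) (Set.inter_subset_right)
        (disjoint_compl_right)
  calc colMeasure n p (A ∩ B)
      = (ENNReal.ofReal p + ENNReal.ofReal (1 - p)) * colMeasure n p (A ∩ B) := by
        rw [← ENNReal.ofReal_add (le_of_lt hp0) (by linarith)]
        norm_num
    _ = ENNReal.ofReal p * colMeasure n p (A ∩ B) +
        ENNReal.ofReal (1 - p) * colMeasure n p (A ∩ B) := by ring
    _ ≤ ENNReal.ofReal (1 - p) * colMeasure n p (A ∩ Bᶜ) +
        ENNReal.ofReal (1 - p) * colMeasure n p (A ∩ B) := by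
        exact add_le_add key le_rfl
    _ = ENNReal.ofReal (1 - p) * (colMeasure n p (A ∩ B) + colMeasure n p (A ∩ Bᶜ)) := by ring
    _ = ENNReal.ofReal (1 - p) * colMeasure n p A := by rw [hsplit]

/-- Probability of satisfying a matching of disjoint pair-constraints. -/
lemma measure_matching_le {n : ℕ} (hp0 : 0 < p) (hp2 : p ≤ 1 / 2)
    (M : Finset (V n × V n))
    (hne : ∀ e ∈ M, e.1 ≠ e.2)
    (hpd : ∀ e ∈ M, ∀ e' ∈ M, e ≠ e' →
      e.1 ≠ e'.1 ∧ e.1 ≠ e'.2 ∧ e.2 ≠ e'.1 ∧ e.2 ≠ e'.2) :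
    colMeasure n p {χ | ∀ e ∈ M, χ e.1 = χ e.2} ≤ ENNReal.ofReal (1 - p) ^ M.card := by
  classical
  induction M using Finset.induction_on with
  | empty =>
    simp only [Finset.notMem_empty, false_implies, implies_true, Set.setOf_true,
      Finset.card_empty, pow_zero]
    haveI := colMeasure_probability n (le_of_lt hp0) (by linarith)
    exact le_of_eq (measure_univ)
  | @insert e M heM ih =>
    have hstep : {χ : V n → Bool | ∀ e' ∈ insert e M, χ e'.1 = χ e'.2} =
        {χ : V n → Bool | ∀ e' ∈ M, χ e'.1 = χ e'.2} ∩ {χ | χ e.1 = χ e.2} := by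
      ext χ
      simp only [Set.mem_inter_iff, Set.mem_setOf_eq, Finset.mem_insert]
      constructor
      · intro h
        exact ⟨fun e' he' => h e' (Or.inr he'), h e (Or.inl rfl)⟩
      · rintro ⟨h1, h2⟩ e' (rfl | he')
        · exact h2
        · exact h1 e' he'
    rw [hstep, Finset.card_insert_of_notMem heM, pow_succ, mul_comm (_ ^ M.card)]
    have hinv : ∀ χ ∈ {χ : V n → Bool | ∀ e' ∈ M, χ e'.1 = χ e'.2},
        flipCol e.1 χ ∈ {χ : V n → Bool | ∀ e' ∈ M, χ e'.1 = χ e'.2} := by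
      intro χ hχ e' he'
      have h4 := hpd e (Finset.mem_insert_self e M) e' (Finset.mem_insert_of_mem he')
        (fun hc => heM (hc ▸ he'))
      rw [flipCol_apply_ne _ _ (Ne.symm h4.1), flipCol_apply_ne _ _ (Ne.symm h4.2.1)]
      exact hχ e' he'
    calc colMeasure n p _ ≤ ENNReal.ofReal (1 - p) *
          colMeasure n p {χ : V n → Bool | ∀ e' ∈ M, χ e'.1 = χ e'.2} :=
        measure_constraint_le hp0 hp2 _ e.1 e.2 (hne e (Finset.mem_insert_self e M)) hinv
      _ ≤ ENNReal.ofReal (1 - p) * ENNReal.ofReal (1 - p) ^ M.card := by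
          refine mul_le_mul' le_rfl (ih ?_ ?_)
          · exact fun e' he' => hne e' (Finset.mem_insert_of_mem he')
          · exact fun e' he' e'' he'' h =>
              hpd e' (Finset.mem_insert_of_mem he') e'' (Finset.mem_insert_of_mem he'') h


lemma flip_base_inj {x y : V n} {i : Fin n} (h : flip x i = flip y i) : x = y := by
  funext k
  have := congrFun h k
  rcases eq_or_ne k i with rfl | hk
  · rw [flip_apply_same, flip_apply_same] at this
    simpa using congrArg (fun b => !b) this
  · rwa [flip_apply_ne _ hk, flip_apply_ne _ hk] at this

lemma pair_eq_of_lt {a b c d : Fin n} (hab : a < b) (hcd : c < d)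
    (ha : a = c ∨ a = d) (hb : b = c ∨ b = d) : a = c ∧ b = d := by
  rcases ha with rfl | rfl
  · rcases hb with rfl | rfl
    · exact absurd hab (lt_irrefl _)
    · exact ⟨rfl, rfl⟩
  · rcases hb with rfl | rfl
    · exact absurd (hab.trans hcd) (lt_irrefl _)
    · exact absurd hab (lt_irrefl _)

/-- The left/right vertices of the constraint indexed by a pair of coordinates. -/
def lvert (u : V n) (q : Fin n × Fin n) : V n := flip (flip u q.1) q.2

def rvert (u' : V n) (σ : Equiv.Perm (Fin n)) (q : Fin n × Fin n) : V n :=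
  flip (flip u' (σ q.1)) (σ q.2)

lemma mem_pair_of_dSupp {u : V n} {q : Fin n × Fin n} (hq : q.1 ≠ q.2) :
    dSupp u (lvert u q) = {q.1, q.2} := dSupp_flip_flip hq

lemma lvert_inj {u : V n} {q q' : Fin n × Fin n} (h1 : q.1 < q.2) (h1' : q'.1 < q'.2)
    (h : lvert u q = lvert u q') : q = q' := by
  have hD : ({q.1, q.2} : Finset (Fin n)) = {q'.1, q'.2} := by
    rw [← mem_pair_of_dSupp (ne_of_lt h1), ← mem_pair_of_dSupp (ne_of_lt h1'), h]
  have ha : q.1 = q'.1 ∨ q.1 = q'.2 := by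
    have : q.1 ∈ ({q'.1, q'.2} : Finset (Fin n)) := hD ▸ (by simp)
    simpa using this
  have hb : q.2 = q'.1 ∨ q.2 = q'.2 := by
    have : q.2 ∈ ({q'.1, q'.2} : Finset (Fin n)) := hD ▸ (by simp)
    simpa using this
  obtain ⟨e1, e2⟩ := pair_eq_of_lt h1 h1' ha hb
  exact Prod.ext e1 e2

lemma dSupp_rvert {u' : V n} {σ : Equiv.Perm (Fin n)} {q : Fin n × Fin n} (hq : q.1 ≠ q.2) :
    dSupp u' (rvert u' σ q) = {σ q.1, σ q.2} :=
  dSupp_flip_flip (fun hc => hq (σ.injective hc))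

lemma rvert_inj {u' : V n} {σ : Equiv.Perm (Fin n)} {q q' : Fin n × Fin n}
    (h1 : q.1 < q.2) (h1' : q'.1 < q'.2) (h : rvert u' σ q = rvert u' σ q') : q = q' := by
  have hD : ({σ q.1, σ q.2} : Finset (Fin n)) = {σ q'.1, σ q'.2} := by
    rw [← dSupp_rvert (ne_of_lt h1), ← dSupp_rvert (ne_of_lt h1'), h]
  have ha : q.1 = q'.1 ∨ q.1 = q'.2 := by
    have : σ q.1 ∈ ({σ q'.1, σ q'.2} : Finset (Fin n)) := hD ▸ (by simp)
    rcases Finset.mem_insert.1 this with h' | h'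
    · exact Or.inl (σ.injective h')
    · exact Or.inr (σ.injective (Finset.mem_singleton.1 h'))
  have hb : q.2 = q'.1 ∨ q.2 = q'.2 := by
    have : σ q.2 ∈ ({σ q'.1, σ q'.2} : Finset (Fin n)) := hD ▸ (by simp)
    rcases Finset.mem_insert.1 this with h' | h'
    · exact Or.inl (σ.injective h')
    · exact Or.inr (σ.injective (Finset.mem_singleton.1 h'))
  obtain ⟨e1, e2⟩ := pair_eq_of_lt h1 h1' ha hb
  exact Prod.ext e1 e2

lemma bool_not_eq_self (a : Bool) : ¬ (!a) = a := by cases a <;> simp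

/-- Structure of trivial constraints. -/
lemma trivial_pair {u u' : V n} (hne : u ≠ u') {σ : Equiv.Perm (Fin n)}
    {q : Fin n × Fin n} (hq : q.1 ≠ q.2) (h : lvert u q = rvert u' σ q) :
    (q.1 ∈ dSupp u u' ∨ q.2 ∈ dSupp u u') ∧
      dSupp u u' ⊆ {q.1, q.2, σ q.1, σ q.2} := by
  constructor
  · by_contra hcon
    push_neg at hcon
    obtain ⟨h1, h2⟩ := hcon
    have hu1 : u q.1 = u' q.1 := by
      by_contra hc; exact h1 (mem_dSupp.2 hc)
    have hu2 : u q.2 = u' q.2 := by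
      by_contra hc; exact h2 (mem_dSupp.2 hc)
    have hiσ : q.1 = σ q.1 ∨ q.1 = σ q.2 := by
      by_contra hc
      push_neg at hc
      have := congrFun h q.1
      rw [show lvert u q q.1 = !u q.1 from flip_flip_apply_fst hq] at this
      rw [show rvert u' σ q q.1 = u' q.1 from by
        rw [rvert, flip_apply_ne _ hc.2, flip_apply_ne _ hc.1]] at this
      rw [hu1] at this
      exact bool_not_eq_self _ this
    have hjσ : q.2 = σ q.1 ∨ q.2 = σ q.2 := by
      by_contra hc
      push_neg at hc
      have := congrFun h q.2
      rw [show lvert u q q.2 = !u q.2 from by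
        rw [lvert, flip_apply_same, flip_apply_ne u (Ne.symm hq)]] at this
      rw [show rvert u' σ q q.2 = u' q.2 from by
        rw [rvert, flip_apply_ne _ hc.2, flip_apply_ne _ hc.1]] at this
      rw [hu2] at this
      exact bool_not_eq_self _ this
    rcases hiσ with hi | hi <;> rcases hjσ with hj | hj
    · exact hq (hi.trans hj.symm)
    · -- σ q.1 = q.1, σ q.2 = q.2
      apply hne
      have : rvert u' σ q = flip (flip u' q.1) q.2 := by rw [rvert, ← hi, ← hj]
      rw [this] at h
      exact flip_base_inj (flip_base_inj h)
    · -- σ q.1 = q.2, σ q.2 = q.1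
      apply hne
      have : rvert u' σ q = flip (flip u' q.2) q.1 := by rw [rvert, ← hi, ← hj]
      rw [this, flip_comm (Ne.symm hq)] at h
      exact flip_base_inj (flip_base_inj h)
    · exact hq (hi.trans hj.symm)
  · intro k hk
    by_contra hkq
    simp only [Finset.mem_insert, Finset.mem_singleton, not_or] at hkq
    obtain ⟨hk1, hk2, hk3, hk4⟩ := hkq
    have := congrFun h k
    rw [show lvert u q k = u k from by rw [lvert, flip_apply_ne _ hk2, flip_apply_ne _ hk1],
      show rvert u' σ q k = u' k from by rw [rvert, flip_apply_ne _ hk4, flip_apply_ne _ hk3]]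
      at this
    exact (mem_dSupp.1 hk) this


/-- Greedy extraction of an induced matching from a degree-≤2 constraint graph. -/
lemma greedy_matching {α : Type} [DecidableEq α] (F : Finset (α × α)) :
    (∀ z : α, (F.filter fun e => e.1 = z ∨ e.2 = z).card ≤ 2) →
    ∃ M ⊆ F, F.card ≤ 3 * M.card ∧
      (∀ e ∈ M, ∀ e' ∈ M, e ≠ e' → e.1 ≠ e'.1 ∧ e.1 ≠ e'.2 ∧ e.2 ≠ e'.1 ∧ e.2 ≠ e'.2) := by
  induction F using Finset.strongInductionOn with
  | _ F ih =>
    intro hdeg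
    rcases F.eq_empty_or_nonempty with rfl | ⟨e, he⟩
    · exact ⟨∅, Finset.Subset.refl _, by simp, by simp⟩
    · set F' := F.filter
        (fun e' => e'.1 ≠ e.1 ∧ e'.1 ≠ e.2 ∧ e'.2 ≠ e.1 ∧ e'.2 ≠ e.2) with hF'
      have hss : F' ⊂ F := Finset.filter_ssubset.2 ⟨e, he, by simp⟩
      have hdeg' : ∀ z : α, (F'.filter fun e' => e'.1 = z ∨ e'.2 = z).card ≤ 2 := by
        intro z
        refine le_trans (Finset.card_le_card ?_) (hdeg z)
        exact Finset.filter_subset_filter _ (Finset.filter_subset _ _)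
      obtain ⟨M, hMF, hcard, hpd⟩ := ih F' hss hdeg'
      have hrm : F \ F' ⊆ (F.filter fun e' => e'.1 = e.1 ∨ e'.2 = e.1) ∪
          (F.filter fun e' => e'.1 = e.2 ∨ e'.2 = e.2) := by
        intro x hx
        obtain ⟨hxF, hxF'⟩ := Finset.mem_sdiff.1 hx
        rw [hF', Finset.mem_filter] at hxF'
        push_neg at hxF'
        have := hxF' hxF
        rw [Finset.mem_union, Finset.mem_filter, Finset.mem_filter]
        by_cases h1 : x.1 = e.1
        · exact Or.inl ⟨hxF, Or.inl h1⟩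
        · by_cases h2 : x.1 = e.2
          · exact Or.inr ⟨hxF, Or.inl h2⟩
          · by_cases h3 : x.2 = e.1
            · exact Or.inl ⟨hxF, Or.inr h3⟩
            · exact Or.inr ⟨hxF, Or.inr (this h1 h2 h3)⟩
      have hrm3 : (F \ F').card ≤ 3 := by
        have h1 : e ∈ (F.filter fun e' => e'.1 = e.1 ∨ e'.2 = e.1) ∩
            (F.filter fun e' => e'.1 = e.2 ∨ e'.2 = e.2) := by
          rw [Finset.mem_inter, Finset.mem_filter, Finset.mem_filter]
          exact ⟨⟨he, Or.inl rfl⟩, ⟨he, Or.inr rfl⟩⟩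
        have h2 := Finset.card_union_add_card_inter
          (F.filter fun e' => e'.1 = e.1 ∨ e'.2 = e.1)
          (F.filter fun e' => e'.1 = e.2 ∨ e'.2 = e.2)
        have h3 := hdeg e.1
        have h4 := hdeg e.2
        have h5 : 1 ≤ ((F.filter fun e' => e'.1 = e.1 ∨ e'.2 = e.1) ∩
            (F.filter fun e' => e'.1 = e.2 ∨ e'.2 = e.2)).card :=
          Finset.card_pos.2 ⟨e, h1⟩
        have h6 := Finset.card_le_card hrm
        have h7 := Finset.card_union_le (F.filter fun e' => e'.1 = e.1 ∨ e'.2 = e.1)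
          (F.filter fun e' => e'.1 = e.2 ∨ e'.2 = e.2)
        omega
      have hcnt : F.card ≤ F'.card + 3 := by
        have hsub : F' ⊆ F := by rw [hF']; exact Finset.filter_subset _ F
        have h8 := Finset.card_sdiff_add_card_eq_card hsub
        omega
      have heM : e ∉ M := by
        intro hc
        have := Finset.mem_filter.1 (hMF hc)
        exact this.2.1 rfl
      refine ⟨insert e M, ?_, ?_, ?_⟩
      · intro x hx
        rcases Finset.mem_insert.1 hx with rfl | hx'
        · exact he
        · exact Finset.filter_subset _ _ (hMF hx')
      · rw [Finset.card_insert_of_notMem heM]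
        omega
      · intro a ha b hb hab
        rcases Finset.mem_insert.1 ha with rfl | ha' <;>
          rcases Finset.mem_insert.1 hb with rfl | hb'
        · exact absurd rfl hab
        · have := Finset.mem_filter.1 (hMF hb')
          exact ⟨Ne.symm this.2.1, Ne.symm this.2.2.2.1, Ne.symm this.2.2.1,
            Ne.symm this.2.2.2.2⟩
        · have := Finset.mem_filter.1 (hMF ha')
          exact ⟨this.2.1, this.2.2.1, this.2.2.2.1, this.2.2.2.2⟩
        · exact hpd a ha' b hb' hab

/-- The set of increasing coordinate pairs. -/
def Pairs (n : ℕ) : Finset (Fin n × Fin n) :=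
  Finset.univ.filter (fun q => q.1 < q.2)

lemma pairs_card_lb : n * n - n ≤ 2 * (Pairs n).card := by
  classical
  set S : Finset (Fin n × Fin n) := Finset.univ.filter (fun q => q.1 ≠ q.2) with hS
  have hScard : S.card = n * n - n := by
    have h1 := Finset.card_filter_add_card_filter_not
      (s := (Finset.univ : Finset (Fin n × Fin n))) (p := fun q => q.1 ≠ q.2)
    have h2 : (Finset.univ.filter (fun q : Fin n × Fin n => ¬ q.1 ≠ q.2)).card = n := by
      have : (Finset.univ.filter (fun q : Fin n × Fin n => ¬ q.1 ≠ q.2)) =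
          Finset.univ.image (fun i : Fin n => (i, i)) := by
        ext q
        simp only [Finset.mem_filter, Finset.mem_univ, true_and, not_not, Finset.mem_image]
        constructor
        · intro h
          exact ⟨q.1, Prod.ext rfl h⟩
        · rintro ⟨i, -, rfl⟩
          rfl
      rw [this, Finset.card_image_of_injective _
          (fun a b h => by simpa using congrArg Prod.fst h),
        Finset.card_univ, Fintype.card_fin]
    have h3 : (Finset.univ : Finset (Fin n × Fin n)).card = n * n := by
      rw [Finset.card_univ, Fintype.card_prod, Fintype.card_fin]
    rw [hS]
    omega
  have hkey : S.card ≤ 2 * (Pairs n).card := by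
    have himg : S.image (fun q : Fin n × Fin n => if q.1 < q.2 then q else q.swap) ⊆ Pairs n := by
      intro x hx
      obtain ⟨q, hq, rfl⟩ := Finset.mem_image.1 hx
      have hne : q.1 ≠ q.2 := (Finset.mem_filter.1 hq).2
      rw [Pairs, Finset.mem_filter]
      by_cases h : q.1 < q.2
      · rw [if_pos h]; exact ⟨Finset.mem_univ _, h⟩
      · rw [if_neg h]
        exact ⟨Finset.mem_univ _, lt_of_le_of_ne (le_of_not_gt h) (Ne.symm hne)⟩
    have hfib := Finset.card_le_mul_card_image
      (s := S) (f := fun q : Fin n × Fin n => if q.1 < q.2 then q else q.swap) 2 ?hfibers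
    · calc S.card ≤ 2 * (S.image _).card := hfib
        _ ≤ 2 * (Pairs n).card := by
          exact Nat.mul_le_mul_left 2 (Finset.card_le_card himg)
    · intro a ha
      refine le_trans (Finset.card_le_card (fun q hq => ?_)) (?_ : ({a, a.swap} : Finset _).card ≤ 2)
      · obtain ⟨hqS, hqa⟩ := Finset.mem_filter.1 hq
        have hqa' : (if q.1 < q.2 then q else q.swap) = a := hqa
        by_cases h : q.1 < q.2
        · rw [if_pos h] at hqa'
          simp [hqa']
        · rw [if_neg h] at hqa'
          have : q = a.swap := by rw [← hqa']; exact (Prod.swap_swap q).symm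
          simp [this]
      · exact le_trans (Finset.card_insert_le _ _) (by simp)
  omega


lemma measure_triple_le {n : ℕ} (hp0 : 0 < p) (hp2 : p ≤ 1 / 2) (hn : 70 ≤ n)
    (u u' : V n) (hneu : u ≠ u') (σ : Equiv.Perm (Fin n)) :
    colMeasure n p {χ | ∀ i j : Fin n, i ≠ j →
        χ (flip (flip u i) j) = χ (flip (flip u' (σ i)) (σ j))} ≤
      ENNReal.ofReal (1 - p) ^ (n * n / 7) := by
  classical
  set N := (Pairs n).filter (fun q => lvert u q ≠ rvert u' σ q) with hNdef
  set T := (Pairs n).filter (fun q => ¬ lvert u q ≠ rvert u' σ q) with hTdef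
  have hTcard : T.card ≤ 4 * n := by
    rcases T.eq_empty_or_nonempty with h | ⟨q₀, hq₀⟩
    · rw [h, Finset.card_empty]; exact Nat.zero_le _
    · obtain ⟨hq₀P, hq₀t⟩ := Finset.mem_filter.1 hq₀
      rw [not_not] at hq₀t
      have hq₀lt : q₀.1 < q₀.2 := (Finset.mem_filter.1 hq₀P).2
      obtain ⟨-, hDsub⟩ := trivial_pair hneu (ne_of_lt hq₀lt) hq₀t
      have hD4 : (dSupp u u').card ≤ 4 := by
        refine le_trans (Finset.card_le_card hDsub) ?_
        refine le_trans (Finset.card_insert_le _ _) ?_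
        refine Nat.succ_le_succ (le_trans (Finset.card_insert_le _ _) ?_)
        refine Nat.succ_le_succ (le_trans (Finset.card_insert_le _ _) ?_)
        simp
      have hinj : T.card ≤ ((dSupp u u') ×ˢ (Finset.univ : Finset (Fin n))).card := by
        refine Finset.card_le_card_of_injOn
          (fun q => if q.1 ∈ dSupp u u' then (q.1, q.2) else (q.2, q.1)) ?_ ?_
        · intro q hq
          obtain ⟨hqP, hqt⟩ := Finset.mem_filter.1 hq
          rw [not_not] at hqt
          have hqlt : q.1 < q.2 := (Finset.mem_filter.1 hqP).2
          obtain ⟨hor, -⟩ := trivial_pair hneu (ne_of_lt hqlt) hqt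
          show (if q.1 ∈ dSupp u u' then (q.1, q.2) else (q.2, q.1)) ∈
            (dSupp u u') ×ˢ (Finset.univ : Finset (Fin n))
          by_cases h : q.1 ∈ dSupp u u'
          · rw [if_pos h]; exact Finset.mem_product.2 ⟨h, Finset.mem_univ _⟩
          · rw [if_neg h]
            rcases hor with h' | h'
            · exact absurd h' h
            · exact Finset.mem_product.2 ⟨h', Finset.mem_univ _⟩
        · intro q hq q' hq' hEq0
          have hEq : (if q.1 ∈ dSupp u u' then (q.1, q.2) else (q.2, q.1)) =
              (if q'.1 ∈ dSupp u u' then (q'.1, q'.2) else (q'.2, q'.1)) := hEq0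
          have hqlt : q.1 < q.2 :=
            (Finset.mem_filter.1 (Finset.filter_subset _ _ (Finset.mem_coe.1 hq))).2
          have hqlt' : q'.1 < q'.2 :=
            (Finset.mem_filter.1 (Finset.filter_subset _ _ (Finset.mem_coe.1 hq'))).2
          by_cases h : q.1 ∈ dSupp u u' <;> by_cases h' : q'.1 ∈ dSupp u u'
          · rw [if_pos h, if_pos h'] at hEq
            exact Prod.ext (congrArg Prod.fst hEq) (congrArg Prod.snd hEq)
          · rw [if_pos h, if_neg h'] at hEq
            have e1 : q.1 = q'.2 := congrArg Prod.fst hEq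
            have e2 : q.2 = q'.1 := congrArg Prod.snd hEq
            exact absurd (hqlt.trans (e2 ▸ hqlt')) (e1 ▸ lt_irrefl _)
          · rw [if_neg h, if_pos h'] at hEq
            have e1 : q.2 = q'.1 := congrArg Prod.fst hEq
            have e2 : q.1 = q'.2 := congrArg Prod.snd hEq
            exact absurd (hqlt.trans (e1 ▸ hqlt')) (e2 ▸ lt_irrefl _)
          · rw [if_neg h, if_neg h'] at hEq
            exact Prod.ext (congrArg Prod.snd hEq) (congrArg Prod.fst hEq)
      rw [Finset.card_product, Finset.card_univ, Fintype.card_fin] at hinj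
      exact le_trans hinj (Nat.mul_le_mul_right n hD4)
  have hsplit : N.card + T.card = (Pairs n).card :=
    Finset.card_filter_add_card_filter_not _
  set F := N.image (fun q => (lvert u q, rvert u' σ q)) with hFdef
  have hltN : ∀ q ∈ N, q.1 < q.2 := by
    intro q hq
    exact (Finset.mem_filter.1 (Finset.filter_subset _ _ hq)).2
  have hFcard : F.card = N.card := by
    rw [hFdef]
    refine Finset.card_image_of_injOn ?_
    intro q hq q' hq' hEq
    exact lvert_inj (hltN q (Finset.mem_coe.1 hq)) (hltN q' (Finset.mem_coe.1 hq'))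
      (congrArg Prod.fst hEq)
  have hdeg : ∀ z : V n, (F.filter fun e => e.1 = z ∨ e.2 = z).card ≤ 2 := by
    intro z
    rw [Finset.filter_or]
    refine le_trans (Finset.card_union_le _ _) ?_
    have h1 : (F.filter fun e => e.1 = z).card ≤ 1 := by
      rw [Finset.card_le_one]
      intro a ha b hb
      obtain ⟨haF, haz⟩ := Finset.mem_filter.1 ha
      obtain ⟨hbF, hbz⟩ := Finset.mem_filter.1 hb
      obtain ⟨qa, hqa, rfl⟩ := Finset.mem_image.1 haF
      obtain ⟨qb, hqb, rfl⟩ := Finset.mem_image.1 hbF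
      have : qa = qb := lvert_inj (hltN qa hqa) (hltN qb hqb) (haz.trans hbz.symm)
      rw [this]
    have h2 : (F.filter fun e => e.2 = z).card ≤ 1 := by
      rw [Finset.card_le_one]
      intro a ha b hb
      obtain ⟨haF, haz⟩ := Finset.mem_filter.1 ha
      obtain ⟨hbF, hbz⟩ := Finset.mem_filter.1 hb
      obtain ⟨qa, hqa, rfl⟩ := Finset.mem_image.1 haF
      obtain ⟨qb, hqb, rfl⟩ := Finset.mem_image.1 hbF
      have : qa = qb := rvert_inj (hltN qa hqa) (hltN qb hqb) (haz.trans hbz.symm)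
      rw [this]
    omega
  obtain ⟨M, hMF, hc3, hpd⟩ := greedy_matching F hdeg
  have hMne : ∀ e ∈ M, e.1 ≠ e.2 := by
    intro e he
    obtain ⟨q, hq, rfl⟩ := Finset.mem_image.1 (hMF he)
    exact (Finset.mem_filter.1 hq).2
  have hμM := measure_matching_le hp0 hp2 M hMne hpd
  have hsub : {χ : V n → Bool | ∀ i j : Fin n, i ≠ j →
      χ (flip (flip u i) j) = χ (flip (flip u' (σ i)) (σ j))} ⊆
      {χ : V n → Bool | ∀ e ∈ M, χ e.1 = χ e.2} := by
    intro χ hχ e he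
    obtain ⟨q, hq, rfl⟩ := Finset.mem_image.1 (hMF he)
    exact hχ q.1 q.2 (ne_of_lt (hltN q hq))
  have hexp : n * n / 7 ≤ M.card := by
    have hplb := pairs_card_lb (n := n)
    have hnn : 70 * n ≤ n * n := Nat.mul_le_mul_right n hn
    omega
  have hbase : ENNReal.ofReal (1 - p) ≤ 1 := by
    rw [← ENNReal.ofReal_one]
    exact ENNReal.ofReal_le_ofReal (by linarith)
  calc colMeasure n p _ ≤ colMeasure n p {χ : V n → Bool | ∀ e ∈ M, χ e.1 = χ e.2} :=
      measure_mono hsub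
    _ ≤ ENNReal.ofReal (1 - p) ^ M.card := hμM
    _ = ENNReal.ofReal (1 - p) ^ (n * n / 7) *
        ENNReal.ofReal (1 - p) ^ (M.card - n * n / 7) := by
        rw [← pow_add]
        congr 1
        omega
    _ ≤ ENNReal.ofReal (1 - p) ^ (n * n / 7) * 1 :=
        mul_le_mul' le_rfl (pow_le_one' hbase _)
    _ = ENNReal.ofReal (1 - p) ^ (n * n / 7) := mul_one _


/-- The union bound over all pairs and permutations. -/
lemma measure_bad_le {n : ℕ} (hp0 : 0 < p) (hp2 : p ≤ 1 / 2) (hn : 70 ≤ n) :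
    colMeasure n p {χ | ¬ Egood n χ} ≤
      ((2 ^ n * 2 ^ n * n.factorial : ℕ) : ENNReal) *
        ENNReal.ofReal (1 - p) ^ (n * n / 7) := by
  classical
  set Idx : Finset ((V n × V n) × Equiv.Perm (Fin n)) :=
    Finset.univ.filter (fun t => t.1.1 ≠ t.1.2) with hIdx
  have hsub : {χ : V n → Bool | ¬ Egood n χ} ⊆
      ⋃ t ∈ Idx, {χ : V n → Bool | ∀ i j : Fin n, i ≠ j →
        χ (flip (flip t.1.1 i) j) = χ (flip (flip t.1.2 (t.2 i)) (t.2 j))} := by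
    intro χ hχ
    rw [Set.mem_setOf_eq, Egood] at hχ
    push_neg at hχ
    obtain ⟨u, u', hne, σ, hσ⟩ := hχ
    refine Set.mem_biUnion (show ((u, u'), σ) ∈ Idx from ?_) ?_
    · rw [hIdx, Finset.mem_filter]
      exact ⟨Finset.mem_univ _, hne⟩
    · exact hσ
  calc colMeasure n p {χ : V n → Bool | ¬ Egood n χ}
      ≤ colMeasure n p (⋃ t ∈ Idx, {χ : V n → Bool | ∀ i j : Fin n, i ≠ j →
          χ (flip (flip t.1.1 i) j) = χ (flip (flip t.1.2 (t.2 i)) (t.2 j))}) :=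
        measure_mono hsub
    _ ≤ ∑ t ∈ Idx, colMeasure n p {χ : V n → Bool | ∀ i j : Fin n, i ≠ j →
          χ (flip (flip t.1.1 i) j) = χ (flip (flip t.1.2 (t.2 i)) (t.2 j))} :=
        measure_biUnion_finset_le _ _
    _ ≤ ∑ _t ∈ Idx, ENNReal.ofReal (1 - p) ^ (n * n / 7) := by
        refine Finset.sum_le_sum fun t ht => ?_
        exact measure_triple_le hp0 hp2 hn t.1.1 t.1.2
          ((Finset.mem_filter.1 ht).2) t.2
    _ = (Idx.card : ENNReal) * ENNReal.ofReal (1 - p) ^ (n * n / 7) := by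
        rw [Finset.sum_const, nsmul_eq_mul]
    _ ≤ ((2 ^ n * 2 ^ n * n.factorial : ℕ) : ENNReal) *
        ENNReal.ofReal (1 - p) ^ (n * n / 7) := by
        refine mul_le_mul' ?_ le_rfl
        rw [Nat.cast_le]
        calc Idx.card ≤ (Finset.univ : Finset ((V n × V n) × Equiv.Perm (Fin n))).card :=
            Finset.card_filter_le _ _
          _ = 2 ^ n * 2 ^ n * n.factorial := by
            rw [Finset.card_univ, Fintype.card_prod, Fintype.card_prod, Fintype.card_perm]
            have hV : Fintype.card (V n) = 2 ^ n := by
              rw [Fintype.card_fun, Fintype.card_bool, Fintype.card_fin]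
            rw [hV, Fintype.card_fin]


lemma bound_eventually (p : ℕ → ℝ) (hp : ∀ n, p n ∈ Set.Ioc (0 : ℝ) (1 / 2))
    (hgrow : Tendsto (fun n : ℕ => (n : ℝ) * p n / Real.log n) atTop atTop) :
    ∀ᶠ n in atTop, ((2 ^ n * 2 ^ n * n.factorial : ℕ) : ENNReal) *
        ENNReal.ofReal (1 - p n) ^ (n * n / 7) ≤ ENNReal.ofReal (Real.exp (1 - n)) := by
  filter_upwards [hgrow.eventually_ge_atTop 21, eventually_ge_atTop 70] with n h21 h70
  set q := p n with hq
  have hq0 : 0 < q := (hp n).1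
  have hq2 : q ≤ 1 / 2 := (hp n).2
  have h1q : (0:ℝ) ≤ 1 - q := by linarith
  set k := n * n / 7 with hk
  set x := (n : ℝ) with hx
  have hx70 : (70:ℝ) ≤ x := by rw [hx]; exact_mod_cast h70
  have hx0 : (0:ℝ) < x := by linarith
  set L := Real.log x with hL
  have hL0 : (0:ℝ) < L := Real.log_pos (by linarith)
  have hL2 : (2:ℝ) ≤ L := by
    rw [hL, Real.le_log_iff_exp_le hx0]
    have he : Real.exp 1 < 2.7182818286 := Real.exp_one_lt_d9
    have : Real.exp 2 = Real.exp 1 * Real.exp 1 := by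
      rw [← Real.exp_add]; norm_num
    nlinarith [Real.exp_pos 1]
  have hlog2 : Real.log 2 ≤ (0.7:ℝ) := by
    have := Real.log_two_lt_d9
    linarith
  have hlog2pos : (0:ℝ) ≤ Real.log 2 := Real.log_nonneg (by norm_num)
  -- arithmetic: q * k ≥ 3 x L - 1
  have hk7 : x * x / 7 - 1 ≤ (k : ℝ) := by
    have hnat : n * n ≤ 7 * k + 6 := by
      rw [hk]; omega
    have : (x * x : ℝ) ≤ 7 * (k:ℝ) + 6 := by
      rw [hx]
      exact_mod_cast hnat
    linarith
  have hxq : 21 * L ≤ x * q := by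
    have := (le_div_iff₀ hL0).1 h21
    linarith
  have hqk : 3 * (x * L) - 1 ≤ q * (k:ℝ) := by
    have h5 : q * (x * x / 7 - 1) ≤ q * (k:ℝ) := mul_le_mul_of_nonneg_left hk7 hq0.le
    have h6 : (21 * L) * (x / 7) ≤ (x * q) * (x / 7) :=
      mul_le_mul_of_nonneg_right hxq (by linarith)
    have h7 : q * (x * x / 7 - 1) = (x * q) * (x / 7) - q := by ring
    have h8 : (21 * L) * (x / 7) = 3 * (x * L) := by ring
    linarith
  -- the real bound
  have hA : ((2 ^ n * 2 ^ n * n.factorial : ℕ) : ℝ) * (1 - q) ^ k ≤ Real.exp (1 - x) := by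
    have hcast : ((2 ^ n * 2 ^ n * n.factorial : ℕ) : ℝ) =
        (2:ℝ) ^ n * (2:ℝ) ^ n * (n.factorial : ℝ) := by push_cast; ring
    have hfact : (n.factorial : ℝ) ≤ x ^ n := by
      rw [hx]
      exact_mod_cast n.factorial_le_pow
    have h2n : (2:ℝ) ^ n = Real.exp ((n:ℝ) * Real.log 2) := by
      rw [Real.exp_nat_mul, Real.exp_log (by norm_num : (0:ℝ) < 2)]
    have hxn : x ^ n = Real.exp ((n:ℝ) * L) := by
      rw [Real.exp_nat_mul, hL, Real.exp_log hx0]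
    have hpow : (1 - q) ^ k ≤ Real.exp (-(q * (k:ℝ))) := by
      have hle : 1 - q ≤ Real.exp (-q) := by
        have := Real.add_one_le_exp (-q)
        linarith
      calc (1 - q) ^ k ≤ Real.exp (-q) ^ k := pow_le_pow_left₀ h1q hle k
        _ = Real.exp (-(q * (k:ℝ))) := by
          rw [← Real.exp_nat_mul]
          congr 1
          ring
    have hfge : (0:ℝ) ≤ (1 - q) ^ k := pow_nonneg h1q k
    calc ((2 ^ n * 2 ^ n * n.factorial : ℕ) : ℝ) * (1 - q) ^ k
        ≤ ((2:ℝ) ^ n * (2:ℝ) ^ n * x ^ n) * Real.exp (-(q * (k:ℝ))) := by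
          rw [hcast]
          have h2nn : (0:ℝ) ≤ (2:ℝ) ^ n * (2:ℝ) ^ n :=
            mul_nonneg (pow_nonneg (by norm_num) n) (pow_nonneg (by norm_num) n)
          refine mul_le_mul ?_ hpow hfge ?_
          · exact mul_le_mul_of_nonneg_left hfact h2nn
          · exact mul_nonneg h2nn (pow_nonneg hx0.le n)
      _ = Real.exp ((n:ℝ) * Real.log 2 + (n:ℝ) * Real.log 2 + (n:ℝ) * L + -(q * (k:ℝ))) := by
          rw [h2n, hxn, ← Real.exp_add, ← Real.exp_add, ← Real.exp_add]
      _ ≤ Real.exp (1 - x) := by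
          rw [Real.exp_le_exp,
            show (n:ℝ) * Real.log 2 = x * Real.log 2 from by rw [hx],
            show (n:ℝ) * L = x * L from by rw [hx]]
          have hxL : x * 2 ≤ x * L := mul_le_mul_of_nonneg_left hL2 hx0.le
          have hx2 : x * Real.log 2 ≤ x * 0.7 := mul_le_mul_of_nonneg_left hlog2 hx0.le
          linarith
  -- to ENNReal
  calc ((2 ^ n * 2 ^ n * n.factorial : ℕ) : ENNReal) * ENNReal.ofReal (1 - q) ^ k
      = ENNReal.ofReal (((2 ^ n * 2 ^ n * n.factorial : ℕ) : ℝ) * (1 - q) ^ k) := by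
        rw [ENNReal.ofReal_mul (Nat.cast_nonneg _), ENNReal.ofReal_natCast,
          ENNReal.ofReal_pow h1q]
    _ ≤ ENNReal.ofReal (Real.exp (1 - x)) := ENNReal.ofReal_le_ofReal hA

end Prob

/-- The deterministic event has high probability, and implies distinguishability. -/
theorem main_result (p : ℕ → ℝ)
    (hp : ∀ n, p n ∈ Set.Ioc (0 : ℝ) (1 / 2))
    (hgrow : Tendsto (fun n : ℕ => (n : ℝ) * p n / Real.log n) atTop atTop) :
    Tendsto (fun n => colMeasure n (p n) {χ | Distinguishable n 3 χ}) atTop (𝓝 1) := by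
  have hev := bound_eventually p hp hgrow
  have hprob : ∀ n, IsProbabilityMeasure (colMeasure n (p n)) := fun n =>
    colMeasure_probability n (hp n).1.le (le_trans (hp n).2 (by norm_num))
  have hlow : ∀ᶠ n : ℕ in atTop, 1 - ENNReal.ofReal (Real.exp (1 - (n:ℝ))) ≤
      colMeasure n (p n) {χ | Distinguishable n 3 χ} := by
    filter_upwards [hev, eventually_ge_atTop 70] with n hb h70
    haveI := hprob n
    have hEsub : {χ : V n → Bool | Egood n χ} ⊆ {χ | Distinguishable n 3 χ} :=
      fun χ hχ => distinguishable_of_Egood (by omega) hχ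
    have hbad := le_trans (measure_bad_le (hp n).1 (hp n).2 h70) hb
    have hcompl : colMeasure n (p n) {χ | Egood n χ} =
        1 - colMeasure n (p n) {χ | ¬ Egood n χ} := by
      rw [show {χ : V n → Bool | Egood n χ} = {χ : V n → Bool | ¬ Egood n χ}ᶜ from by
          ext χ; simp,
        measure_compl (meas_all _) (measure_ne_top _ _), measure_univ]
    calc 1 - ENNReal.ofReal (Real.exp (1 - n)) ≤
        1 - colMeasure n (p n) {χ | ¬ Egood n χ} := tsub_le_tsub_left hbad 1
      _ = colMeasure n (p n) {χ | Egood n χ} := hcompl.symm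
      _ ≤ _ := measure_mono hEsub
  have hup : ∀ᶠ n in atTop, colMeasure n (p n) {χ | Distinguishable n 3 χ} ≤ 1 := by
    filter_upwards with n
    haveI := hprob n
    exact prob_le_one
  refine tendsto_of_tendsto_of_tendsto_of_le_of_le' ?_ tendsto_const_nhds hlow hup
  have h1 : Tendsto (fun n : ℕ => (1 : ℝ) - Real.exp (1 - n)) atTop (𝓝 1) := by
    have hbot : Tendsto (fun n : ℕ => 1 - (n : ℝ)) atTop atBot := by
      have h0 := (tendsto_neg_atTop_atBot (G := ℝ)).comp
        (tendsto_natCast_atTop_atTop (R := ℝ))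
      have h' := tendsto_atBot_add_const_left atTop (1 : ℝ) h0
      refine h'.congr fun n => ?_
      simp [sub_eq_add_neg, Function.comp]
    have hexp : Tendsto (fun n : ℕ => Real.exp (1 - n)) atTop (𝓝 0) :=
      Real.tendsto_exp_atBot.comp hbot
    simpa using (tendsto_const_nhds.sub hexp)
  have h2 : Tendsto (fun n : ℕ => ENNReal.ofReal (1 - Real.exp (1 - n))) atTop (𝓝 1) := by
    rw [show (1 : ENNReal) = ENNReal.ofReal 1 from (ENNReal.ofReal_one).symm]
    exact ENNReal.tendsto_ofReal h1
  refine h2.congr fun n => ?_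
  rw [ENNReal.ofReal_sub _ (Real.exp_pos _).le, ENNReal.ofReal_one]

end HC

/-- Theorem 1.4 (soft): for `p(n) ∈ (0,1/2]` with `n·p(n)/log n → ∞`, a random
`(p,1-p)`-colouring of `Q_n` is with high probability `3`-distinguishable. -/
theorem random_two_colouring_three_distinguishable
    (p : ℕ → ℝ)
    (hp : ∀ n, p n ∈ Set.Ioc (0 : ℝ) (1 / 2))
    (hgrow : Tendsto (fun n : ℕ => (n : ℝ) * p n / Real.log n) atTop atTop) :
    Tendsto (fun n => colMeasure n (p n) {χ | Distinguishable n 3 χ}) atTop (𝓝 1) := by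
  exact HC.main_result p hp hgrow

end
end

section
/- Let s : ℕ → ℕ be a function with s(n) → ∞ and s(n) = o(n) as n → ∞. Then there exists a constant C > 0 (which may depend on s) such that for all sufficiently large n the following holds: if A ⊆ V(Q_n) with |A| = n and |Γ(A)| ≤ binom(n,2) + n·s(n), then there exists a vertex w ∈ V(Q_n) for which |Γ(w) ∩ A| ≥ n − C·s(n). -/
open MeasureTheory Filter Set Asymptotics Topology

noncomputable section

section HSCoreSection
open Finset
namespace HSCore

variable {n : ℕ}

abbrev V (n : ℕ) := Fin n → Bool

/-- set of coordinates where u and v differ -/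
def Dd (u v : V n) : Finset (Fin n) := {i | u i ≠ v i}

lemma hamming_eq_Dd (u v : V n) : hammingDist u v = (Dd u v).card := rfl

lemma Dd_comm (u v : V n) : Dd u v = Dd v u := by
  unfold Dd; ext i; simp [ne_comm]

lemma Dd_eq_empty_iff {u v : V n} : Dd u v = ∅ ↔ u = v := by
  unfold Dd
  constructor
  · intro h; funext i
    by_contra hne
    have : i ∈ ({i | u i ≠ v i} : Finset (Fin n)) := by simp [hne]
    simp [h] at this
  · intro h; subst h; ext i; simp

lemma Dd_symmDiff (u w v : V n) : Dd u v = symmDiff (Dd u w) (Dd w v) := by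
  ext i
  simp only [Dd, Finset.mem_symmDiff, Finset.mem_filter, Finset.mem_univ, true_and]
  rcases Bool.eq_false_or_eq_true (u i) with h1 | h1 <;>
    rcases Bool.eq_false_or_eq_true (w i) with h2 | h2 <;>
      rcases Bool.eq_false_or_eq_true (v i) with h3 | h3 <;> simp [h1, h2, h3]

/-- flip `w` on the coordinate set `S` -/
def flipS (w : V n) (S : Finset (Fin n)) : V n := fun i => if i ∈ S then !(w i) else w i

@[simp] lemma Dd_flipS (w : V n) (S : Finset (Fin n)) : Dd (flipS w S) w = S := by
  ext i; by_cases h : i ∈ S <;> simp [Dd, flipS, h]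

lemma flipS_Dd (u w : V n) : flipS w (Dd u w) = u := by
  funext i
  by_cases h : u i = w i <;> simp [flipS, Dd, h]
  · cases hw : w i <;> simp [hw] at h ⊢ <;> simp [h]

lemma flipS_inj (w : V n) : Function.Injective (flipS w) := by
  intro S T h
  have := congrArg (fun x => Dd x w) h
  simpa using this

end HSCore

namespace HSCore
variable {n : ℕ}

/-- neighbourhood finset in the hypercube -/
def Nf (v : V n) : Finset (V n) := {u | hammingDist u v = 1}

lemma mem_Nf {u v : V n} : u ∈ Nf v ↔ (Dd u v).card = 1 := by
  simp only [Nf, Finset.mem_filter, Finset.mem_univ, true_and]; exact Iff.rfl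

lemma Nf_symm {u v : V n} : u ∈ Nf v ↔ v ∈ Nf u := by
  rw [mem_Nf, mem_Nf, Dd_comm]

lemma not_mem_Nf_self (v : V n) : v ∉ Nf v := by
  simp [mem_Nf, Dd_eq_empty_iff.mpr rfl]

lemma Nf_eq_image (v : V n) :
    Nf v = (univ : Finset (Fin n)).image (fun i => flipS v {i}) := by
  ext u
  simp only [mem_Nf, Finset.mem_image, Finset.mem_univ, true_and]
  constructor
  · intro h
    obtain ⟨i, hi⟩ := Finset.card_eq_one.mp h
    exact ⟨i, by rw [← flipS_Dd u v, hi]⟩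
  · rintro ⟨i, rfl⟩
    simp

lemma Nf_card (v : V n) : (Nf v).card = n := by
  rw [Nf_eq_image, Finset.card_image_of_injective _
    (fun i j h => by
      have := congrArg (fun x => Dd x v) h
      simp only [Dd_flipS] at this
      exact Finset.singleton_injective this)]
  simp

lemma ne_of_mem_Nf {u v : V n} (h : u ∈ Nf v) : u ≠ v := by
  intro he; subst he; exact not_mem_Nf_self u h

end HSCore

namespace HSCore
variable {n : ℕ}

lemma symmDiff_singleton_mem' {X : Finset (Fin n)} {i : Fin n} (h : i ∈ X) :
    symmDiff X {i} = X.erase i := by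
  ext j
  simp only [Finset.mem_symmDiff, Finset.mem_singleton, Finset.mem_erase]
  constructor
  · rintro (⟨hj, hne⟩ | ⟨rfl, hni⟩)
    · exact ⟨fun he => hne (by simp [he]), hj⟩
    · exact absurd h hni
  · rintro ⟨hne, hj⟩; exact Or.inl ⟨hj, by simp [hne]⟩

lemma symmDiff_singleton_not_mem' {X : Finset (Fin n)} {i : Fin n} (h : i ∉ X) :
    symmDiff X {i} = insert i X := by
  ext j
  simp only [Finset.mem_symmDiff, Finset.mem_singleton, Finset.mem_insert]
  constructor
  · rintro (⟨hj, _⟩ | ⟨rfl, _⟩)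
    · exact Or.inr hj
    · exact Or.inl rfl
  · rintro (rfl | hj)
    · exact Or.inr ⟨rfl, h⟩
    · exact Or.inl ⟨hj, fun he => h (by rwa [← he])⟩

lemma symmDiff_singleton_singleton {p q : Fin n} (h : p ≠ q) :
    symmDiff ({p} : Finset (Fin n)) {q} = {p, q} := by
  rw [symmDiff_comm, symmDiff_singleton_not_mem' (by simpa using h)]

/-- structure of a common neighbour -/
lemma common_nbr {a b x : V n} (hab : a ≠ b) (hx : x ∈ Nf a ∩ Nf b) :
    (Dd a b).card = 2 ∧ ∃ p ∈ Dd a b, x = flipS a {p} := by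
  rw [Finset.mem_inter, mem_Nf, mem_Nf] at hx
  obtain ⟨p, hp⟩ := Finset.card_eq_one.mp hx.1
  obtain ⟨q, hq⟩ := Finset.card_eq_one.mp hx.2
  have hDab : Dd a b = symmDiff ({p} : Finset (Fin n)) {q} := by
    rw [← hp, ← hq, Dd_comm x a]; exact Dd_symmDiff a x b
  have hpq : p ≠ q := by
    rintro rfl
    rw [symmDiff_self] at hDab
    exact hab (Dd_eq_empty_iff.mp (by simpa using hDab))
  rw [symmDiff_singleton_singleton hpq] at hDab
  refine ⟨by rw [hDab]; exact Finset.card_pair hpq, p, by simp [hDab], ?_⟩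
  rw [← flipS_Dd x a, hp]

lemma inter_Nf_empty {a b : V n} (hab : a ≠ b) (h2 : hammingDist a b ≠ 2) :
    Nf a ∩ Nf b = ∅ := by
  rw [Finset.eq_empty_iff_forall_notMem]
  intro x hx
  exact h2 ((common_nbr hab hx).1)

lemma inter_Nf_card {a b : V n} (hab : a ≠ b) : (Nf a ∩ Nf b).card ≤ 2 := by
  by_cases hne : (Nf a ∩ Nf b).Nonempty
  · obtain ⟨x₀, hx₀⟩ := hne
    have h2 : (Dd a b).card = 2 := (common_nbr hab hx₀).1
    have hsub : Nf a ∩ Nf b ⊆ (Dd a b).image (fun p => flipS a {p}) := by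
      intro x hx
      obtain ⟨-, p, hp, rfl⟩ := common_nbr hab hx
      exact Finset.mem_image_of_mem _ hp
    calc (Nf a ∩ Nf b).card ≤ ((Dd a b).image (fun p => flipS a {p})).card :=
          Finset.card_le_card hsub
      _ ≤ (Dd a b).card := Finset.card_image_le
      _ = 2 := h2
  · rw [Finset.not_nonempty_iff_eq_empty] at hne
    simp [hne]

/-- every "triangle" (three points pairwise at Hamming distance 2) has a common neighbour
which is a common neighbour of the first two. -/
lemma triangle_center {u v x : V n} (huv : hammingDist u v = 2)
    (hxu : hammingDist x u = 2) (hxv : hammingDist x v = 2) :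
    ∃ c, c ∈ Nf u ∩ Nf v ∧ x ∈ Nf c := by
  have hP : (Dd u v).card = 2 := huv
  have hQ : (Dd u x).card = 2 := by rw [Dd_comm]; exact hxu
  have hR : Dd v x = symmDiff (Dd v u) (Dd u x) := Dd_symmDiff v u x
  have hRcard : (symmDiff (Dd v u) (Dd u x)).card = 2 := by rw [← hR, Dd_comm]; exact hxv
  -- |P ∩ Q| = 1
  have hint : ((Dd u v) ∩ (Dd u x)).Nonempty := by
    by_contra hcon
    rw [Finset.not_nonempty_iff_eq_empty] at hcon
    have : symmDiff (Dd v u) (Dd u x) = Dd v u ∪ Dd u x := by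
      rw [symmDiff_eq_sup_sdiff_inf]
      rw [Dd_comm v u] at *
      simp [Finset.inf_eq_inter, hcon, Finset.sup_eq_union]
    rw [this, Finset.card_union_of_disjoint (by
      rw [Finset.disjoint_iff_inter_eq_empty, Dd_comm v u]; exact hcon)] at hRcard
    rw [Dd_comm v u] at hRcard
    omega
  obtain ⟨i, hi⟩ := hint
  rw [Finset.mem_inter] at hi
  have hfu : Dd (flipS u {i}) u = ({i} : Finset (Fin n)) := Dd_flipS u {i}
  have hfu' : Dd u (flipS u {i}) = ({i} : Finset (Fin n)) := by rw [Dd_comm]; exact hfu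
  refine ⟨flipS u {i}, ?_, ?_⟩
  · rw [Finset.mem_inter, mem_Nf, mem_Nf]
    constructor
    · simp [hfu]
    · have h5 : Dd (flipS u {i}) v = symmDiff (Dd (flipS u {i}) u) (Dd u v) :=
        Dd_symmDiff _ u v
      rw [hfu] at h5
      rw [h5, symmDiff_comm, symmDiff_singleton_mem' hi.1, Finset.card_erase_of_mem hi.1, hP]
  · rw [mem_Nf]
    have h6 : Dd x (flipS u {i}) = symmDiff (Dd x u) (Dd u (flipS u {i})) :=
      Dd_symmDiff x u _
    rw [hfu'] at h6
    have hiQ : i ∈ Dd x u := by rw [Dd_comm]; exact hi.2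
    rw [h6, symmDiff_singleton_mem' hiQ, Finset.card_erase_of_mem hiQ, Dd_comm x u, hQ]

end HSCore

namespace HSCore
variable {n : ℕ}

lemma card_symmDiff' (P Q : Finset (Fin n)) :
    (symmDiff P Q).card + 2 * (P ∩ Q).card = P.card + Q.card := by
  have h1 : (P \ Q).card + (P ∩ Q).card = P.card := Finset.card_sdiff_add_card_inter P Q
  have h2 : (Q \ P).card + (Q ∩ P).card = Q.card := Finset.card_sdiff_add_card_inter Q P
  have h3 : symmDiff P Q = (P \ Q) ∪ (Q \ P) := by
    ext i; simp only [Finset.mem_symmDiff, Finset.mem_union, Finset.mem_sdiff]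
  have h4 : ((P \ Q) ∪ (Q \ P)).card = (P \ Q).card + (Q \ P).card := by
    apply Finset.card_union_of_disjoint
    rw [Finset.disjoint_iff_inter_eq_empty]
    ext i; simp only [Finset.mem_inter, Finset.mem_sdiff, Finset.notMem_empty, iff_false,
      not_and]; tauto
  rw [h3, h4, Finset.inter_comm P Q] at *
  omega

/-- codegree bound for pairs not at distance 2 -/
lemma coD_le_six {A : Finset (V n)} {u v : V n} (huv : u ≠ v)
    (h2 : hammingDist u v ≠ 2) :
    (A.filter fun x => hammingDist x u = 2 ∧ hammingDist x v = 2).card ≤ 6 := by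
  set S := A.filter fun x => hammingDist x u = 2 ∧ hammingDist x v = 2 with hS
  rcases S.eq_empty_or_nonempty with he | ⟨x₀, hx₀⟩
  · simp [he]
  · have key : ∀ x ∈ S, (Dd u v).card = 4 ∧ Dd x u ⊆ Dd u v ∧ (Dd x u).card = 2 := by
      intro x hx
      rw [hS, Finset.mem_filter] at hx
      obtain ⟨-, hxu, hxv⟩ := hx
      have hd : Dd u v = symmDiff (Dd u x) (Dd x v) := Dd_symmDiff u x v
      have hc := card_symmDiff' (Dd u x) (Dd x v)
      have hux : (Dd u x).card = 2 := by rw [Dd_comm]; exact hxu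
      have hxv' : (Dd x v).card = 2 := hxv
      have hne0 : (Dd u v).card ≠ 0 := by
        intro hcon
        exact huv (Dd_eq_empty_iff.mp (Finset.card_eq_zero.mp hcon))
      have h2' : (Dd u v).card ≠ 2 := h2
      rw [← hd] at hc
      have hm : ((Dd u x) ∩ (Dd x v)).card = 0 := by omega
      have hcard4 : (Dd u v).card = 4 := by omega
      have hdisj : (Dd u x) ∩ (Dd x v) = ∅ := Finset.card_eq_zero.mp hm
      have hsub : Dd u x ⊆ Dd u v := by
        rw [hd]
        intro i hi
        rw [Finset.mem_symmDiff]
        exact Or.inl ⟨hi, fun hj => by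
          have : i ∈ (Dd u x) ∩ (Dd x v) := Finset.mem_inter.mpr ⟨hi, hj⟩
          simp [hdisj] at this⟩
      refine ⟨hcard4, by rwa [Dd_comm], by rw [Dd_comm]; exact hux⟩
    have hsub : S ⊆ ((Dd u v).powersetCard 2).image (flipS u) := by
      intro x hx
      obtain ⟨-, hsx, hcx⟩ := key x hx
      refine Finset.mem_image.mpr ⟨Dd x u, ?_, flipS_Dd x u⟩
      exact Finset.mem_powersetCard.mpr ⟨hsx, hcx⟩
    calc S.card ≤ _ := Finset.card_le_card hsub
      _ ≤ ((Dd u v).powersetCard 2).card := Finset.card_image_le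
      _ = (Dd u v).card.choose 2 := Finset.card_powersetCard 2 _
      _ = 6 := by rw [(key x₀ hx₀).1]; decide

/-- a vertex not adjacent to `w` has at most 3 neighbours of `w` at distance 2 -/
lemma cross_le_three {w a : V n} (h1 : hammingDist a w ≠ 1) :
    ((Nf w).filter fun b => hammingDist a b = 2).card ≤ 3 := by
  set S := (Nf w).filter fun b => hammingDist a b = 2 with hS
  rcases S.eq_empty_or_nonempty with he | ⟨b₀, hb₀⟩
  · simp [he]
  · have key : ∀ b ∈ S, (Dd a w).card = 3 ∧ ∃ i ∈ Dd a w, b = flipS w {i} := by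
      intro b hb
      rw [hS, Finset.mem_filter, mem_Nf] at hb
      obtain ⟨hbw, hab⟩ := hb
      obtain ⟨i, hi⟩ := Finset.card_eq_one.mp hbw
      have hd : Dd a b = symmDiff (Dd a w) (Dd w b) := Dd_symmDiff a w b
      have hwb : Dd w b = {i} := by rw [Dd_comm]; exact hi
      rw [hwb] at hd
      by_cases hin : i ∈ Dd a w
      · have : Dd a b = (Dd a w).erase i := by rw [hd, symmDiff_singleton_mem' hin]
        have hc : (Dd a w).card - 1 = 2 := by
          rw [← Finset.card_erase_of_mem hin, ← this]; exact hab
        have hcn0 : (Dd a w).card ≠ 0 := by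
          intro h0; rw [Finset.card_eq_zero] at h0; simp [h0] at hin
        refine ⟨by omega, i, hin, ?_⟩
        rw [← flipS_Dd b w, hi]
      · exfalso
        have : Dd a b = insert i (Dd a w) := by rw [hd, symmDiff_singleton_not_mem' hin]
        have hc : (Dd a w).card + 1 = 2 := by
          rw [← Finset.card_insert_of_notMem hin, ← this]; exact hab
        have : (Dd a w).card = 1 := by omega
        exact h1 this
    have hsub : S ⊆ (Dd a w).image (fun i => flipS w {i}) := by
      intro b hb
      obtain ⟨-, i, hi, rfl⟩ := key b hb
      exact Finset.mem_image_of_mem _ hi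
    calc S.card ≤ _ := Finset.card_le_card hsub
      _ ≤ (Dd a w).card := Finset.card_image_le
      _ = 3 := (key b₀ hb₀).1

end HSCore

namespace HSCore
variable {n : ℕ}

/-- degree of `w` into `A` -/
def deg (A : Finset (V n)) (w : V n) : ℕ := (Nf w ∩ A).card

/-- distance-2 degree within `A` -/
def degD (A : Finset (V n)) (a : V n) : ℕ :=
  (A.filter fun b => hammingDist a b = 2).card

/-- number of ordered pairs of `A` at Hamming distance 2 -/
def eD (A : Finset (V n)) : ℕ := ∑ a ∈ A, degD A a

lemma deg_eq_sum (A : Finset (V n)) (w : V n) :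
    deg A w = ∑ a ∈ A, if w ∈ Nf a then 1 else 0 := by
  rw [deg, ← Finset.sum_filter]
  have : Nf w ∩ A = A.filter (fun a => w ∈ Nf a) := by
    ext a
    simp only [Finset.mem_inter, Finset.mem_filter]
    rw [← Nf_symm]
    tauto
  rw [this]
  simp

lemma sum_deg (A : Finset (V n)) : ∑ w : V n, deg A w = n * A.card := by
  simp_rw [deg_eq_sum]
  rw [Finset.sum_comm]
  have : ∀ a ∈ A, (∑ w : V n, if w ∈ Nf a then 1 else 0) = n := by
    intro a _
    rw [Finset.sum_ite_mem, Finset.univ_inter, Finset.sum_const, Nf_card, smul_eq_mul, mul_one]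
  rw [Finset.sum_congr rfl this, Finset.sum_const, smul_eq_mul, mul_comm]

lemma deg_eq_zero_of_not_mem_biUnion (A : Finset (V n)) {w : V n}
    (hw : w ∉ A.biUnion Nf) : deg A w = 0 := by
  rw [deg, Finset.card_eq_zero, Finset.eq_empty_iff_forall_notMem]
  intro a ha
  rw [Finset.mem_inter] at ha
  exact hw (Finset.mem_biUnion.mpr ⟨a, ha.2, Nf_symm.mp ha.1⟩)

lemma degD_symm_filter (A : Finset (V n)) (a : V n) :
    (A.filter fun b => hammingDist b a = 2) = (A.filter fun b => hammingDist a b = 2) := by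
  apply Finset.filter_congr
  intro b _
  rw [hammingDist_comm]

/-- Bonferroni inequality -/
lemma bonferroni (K : Finset (V n)) : n * K.card ≤ (K.biUnion Nf).card + eD K := by
  classical
  induction K using Finset.induction_on with
  | empty => simp [eD]
  | @insert aa K ha ih =>
    set cnt := (K.filter fun b => hammingDist aa b = 2).card with hcnt
    have hbi : (insert aa K).biUnion Nf = Nf aa ∪ K.biUnion Nf := Finset.biUnion_insert ..
    have hcui : (Nf aa ∪ K.biUnion Nf).card + (Nf aa ∩ K.biUnion Nf).card
        = n + (K.biUnion Nf).card := by
      rw [Finset.card_union_add_card_inter, Nf_card]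
    have hint : (Nf aa ∩ K.biUnion Nf).card ≤ 2 * cnt := by
      have h1 : Nf aa ∩ K.biUnion Nf ⊆ K.biUnion (fun b => Nf aa ∩ Nf b) := by
        intro x hx
        rw [Finset.mem_inter, Finset.mem_biUnion] at hx
        obtain ⟨hxa, b, hb, hxb⟩ := hx
        exact Finset.mem_biUnion.mpr ⟨b, hb, Finset.mem_inter.mpr ⟨hxa, hxb⟩⟩
      calc (Nf aa ∩ K.biUnion Nf).card ≤ ∑ b ∈ K, (Nf aa ∩ Nf b).card :=
            le_trans (Finset.card_le_card h1) (Finset.card_biUnion_le)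
        _ ≤ ∑ b ∈ K, (if hammingDist aa b = 2 then 2 else 0) := by
            apply Finset.sum_le_sum
            intro b hb
            have hab : aa ≠ b := fun he => ha (he ▸ hb)
            by_cases hd : hammingDist aa b = 2
            · simp only [hd, if_true]; exact inter_Nf_card hab
            · simp only [hd, if_false]
              rw [inter_Nf_empty hab hd]
              simp
        _ = 2 * cnt := by
            rw [← Finset.sum_filter, Finset.sum_const, smul_eq_mul, hcnt, mul_comm]
    have heD : eD (insert aa K) = eD K + 2 * cnt := by
      rw [eD, Finset.sum_insert ha]
      have h2 : degD (insert aa K) aa = cnt := by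
        rw [degD, Finset.filter_insert]
        simp only [hammingDist_self]
        rw [if_neg (by norm_num)]
      have h3 : ∀ x ∈ K, degD (insert aa K) x = degD K x + (if hammingDist x aa = 2 then 1 else 0) := by
        intro x hx
        rw [degD, Finset.filter_insert, degD]
        by_cases hd : hammingDist x aa = 2
        · rw [if_pos hd, Finset.card_insert_of_notMem (fun hc => ha (Finset.mem_of_mem_filter _ hc)), if_pos hd]
        · rw [if_neg hd, if_neg hd, add_zero]
      rw [Finset.sum_congr rfl h3, Finset.sum_add_distrib, ← Finset.sum_filter]
      have h4 : (K.filter fun x => hammingDist x aa = 2).card = cnt := by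
        rw [hcnt, degD_symm_filter]
      simp only [Finset.sum_const, smul_eq_mul, mul_one]
      rw [h4, h2, eD]
      ring
    rw [Finset.card_insert_of_notMem ha, hbi, heD]
    have hmul : n * (K.card + 1) = n * K.card + n := by ring
    omega

end HSCore

namespace HSCore
variable {n : ℕ}

lemma eD_le_sq (K : Finset (V n)) : eD K ≤ K.card * K.card := by
  rw [eD]
  calc ∑ a ∈ K, degD K a ≤ ∑ _a ∈ K, K.card :=
        Finset.sum_le_sum (fun a _ => Finset.card_filter_le _ _)
    _ = K.card * K.card := by rw [Finset.sum_const, smul_eq_mul]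

lemma sum_deg_sq_le (K : Finset (V n)) :
    ∑ w : V n, deg K w * deg K w ≤ n * K.card + 2 * eD K := by
  have expand : ∀ w : V n, deg K w * deg K w
      = ∑ a ∈ K, ∑ b ∈ K, (if w ∈ Nf a ∧ w ∈ Nf b then 1 else 0) := by
    intro w
    rw [deg_eq_sum, Finset.sum_mul_sum]
    apply Finset.sum_congr rfl; intro a _
    apply Finset.sum_congr rfl; intro b _
    by_cases h1 : w ∈ Nf a <;> by_cases h2 : w ∈ Nf b <;> simp [h1, h2]
  calc ∑ w : V n, deg K w * deg K w
      = ∑ a ∈ K, ∑ b ∈ K, (Nf a ∩ Nf b).card := by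
        simp_rw [expand]
        rw [Finset.sum_comm]
        apply Finset.sum_congr rfl; intro a _
        rw [Finset.sum_comm]
        apply Finset.sum_congr rfl; intro b _
        simp_rw [← Finset.mem_inter]
        rw [Finset.sum_ite_mem, Finset.univ_inter, Finset.sum_const, smul_eq_mul, mul_one]
    _ ≤ n * K.card + 2 * eD K := by
        have hterm : ∀ a ∈ K, ∑ b ∈ K, (Nf a ∩ Nf b).card ≤ n + 2 * degD K a := by
          intro a ha
          rw [← Finset.add_sum_erase _ _ ha]
          have h1 : (Nf a ∩ Nf a).card = n := by rw [Finset.inter_self, Nf_card]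
          have h2 : ∑ b ∈ K.erase a, (Nf a ∩ Nf b).card ≤ 2 * degD K a := by
            calc ∑ b ∈ K.erase a, (Nf a ∩ Nf b).card
                ≤ ∑ b ∈ K.erase a, (if hammingDist a b = 2 then 2 else 0) := by
                  apply Finset.sum_le_sum
                  intro b hb
                  have hab : a ≠ b := fun he => (Finset.mem_erase.mp hb).1 he.symm
                  by_cases hd : hammingDist a b = 2
                  · simp only [hd, if_true]; exact inter_Nf_card hab
                  · simp only [hd, if_false]
                    rw [inter_Nf_empty hab hd]; simp
              _ = 2 * ((K.erase a).filter fun b => hammingDist a b = 2).card := by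
                  rw [← Finset.sum_filter, Finset.sum_const, smul_eq_mul, mul_comm]
              _ ≤ 2 * degD K a := by
                  apply Nat.mul_le_mul_left
                  apply Finset.card_le_card
                  exact Finset.filter_subset_filter _ (Finset.erase_subset a K)
          omega
        calc ∑ a ∈ K, ∑ b ∈ K, (Nf a ∩ Nf b).card ≤ ∑ a ∈ K, (n + 2 * degD K a) :=
              Finset.sum_le_sum hterm
          _ = n * K.card + 2 * eD K := by
              rw [Finset.sum_add_distrib, Finset.sum_const, smul_eq_mul, ← Finset.mul_sum, eD]
              ring

/-- Corradi / Cauchy-Schwarz bound on the boundary of `K` -/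
lemma corradi (K : Finset (V n)) :
    ((n : ℝ) * K.card)^2 ≤ ((K.biUnion Nf).card : ℝ) * (n * K.card + 2 * eD K) := by
  have hsum : ∑ w ∈ K.biUnion Nf, ((deg K w : ℝ)) = (n : ℝ) * K.card := by
    have hz : ∀ w ∈ (Finset.univ : Finset (V n)), w ∉ K.biUnion Nf → ((deg K w : ℝ)) = 0 :=
      fun w _ hw => by rw [deg_eq_zero_of_not_mem_biUnion K hw]; simp
    rw [Finset.sum_subset (Finset.subset_univ _) hz, ← Nat.cast_sum, sum_deg]
    push_cast; ring
  have hsq : ∑ w ∈ K.biUnion Nf, ((deg K w : ℝ))^2 ≤ (n : ℝ) * K.card + 2 * eD K := by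
    calc ∑ w ∈ K.biUnion Nf, ((deg K w : ℝ))^2 ≤ ∑ w : V n, ((deg K w : ℝ))^2 := by
          apply Finset.sum_le_sum_of_subset_of_nonneg (Finset.subset_univ _)
          intro w _ _; positivity
      _ ≤ (n : ℝ) * K.card + 2 * eD K := by
          have := sum_deg_sq_le K
          have hcast : ∑ w : V n, ((deg K w : ℝ))^2
              = ((∑ w : V n, deg K w * deg K w : ℕ) : ℝ) := by
            rw [Nat.cast_sum]
            apply Finset.sum_congr rfl
            intro w _; push_cast; ring
          rw [hcast]
          calc ((∑ w : V n, deg K w * deg K w : ℕ) : ℝ)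
              ≤ ((n * K.card + 2 * eD K : ℕ) : ℝ) := by exact_mod_cast this
            _ = (n : ℝ) * K.card + 2 * eD K := by push_cast; ring
  calc ((n : ℝ) * K.card)^2 = (∑ w ∈ K.biUnion Nf, ((deg K w : ℝ)))^2 := by rw [hsum]
    _ ≤ ((K.biUnion Nf).card : ℝ) * ∑ w ∈ K.biUnion Nf, ((deg K w : ℝ))^2 :=
        sq_sum_le_card_mul_sum_sq
    _ ≤ ((K.biUnion Nf).card : ℝ) * ((n : ℝ) * K.card + 2 * eD K) := by
        apply mul_le_mul_of_nonneg_left hsq (by positivity)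

end HSCore

namespace HSCore
variable {n : ℕ}

lemma coD_dist2 {A : Finset (V n)} {u v : V n} {Δ : ℕ} (hΔ : ∀ c : V n, deg A c ≤ Δ)
    (huv : hammingDist u v = 2) :
    (A.filter fun x => hammingDist x u = 2 ∧ hammingDist x v = 2).card ≤ 2 * Δ := by
  have hsub : (A.filter fun x => hammingDist x u = 2 ∧ hammingDist x v = 2)
      ⊆ (Nf u ∩ Nf v).biUnion (fun c => Nf c ∩ A) := by
    intro x hx
    rw [Finset.mem_filter] at hx
    obtain ⟨hxA, hxu, hxv⟩ := hx
    obtain ⟨c, hc, hxc⟩ := triangle_center huv hxu hxv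
    exact Finset.mem_biUnion.mpr ⟨c, hc, Finset.mem_inter.mpr ⟨hxc, hxA⟩⟩
  calc (A.filter fun x => hammingDist x u = 2 ∧ hammingDist x v = 2).card
      ≤ ∑ c ∈ Nf u ∩ Nf v, (Nf c ∩ A).card :=
        le_trans (Finset.card_le_card hsub) Finset.card_biUnion_le
    _ ≤ (Nf u ∩ Nf v).card * Δ := by
        apply Finset.sum_le_card_nsmul
        intro c _
        exact hΔ c
    _ ≤ 2 * Δ := by
        by_cases huv' : u = v
        · exfalso; subst huv'; simp [hammingDist_self] at huv
        · exact Nat.mul_le_mul_right Δ (inter_Nf_card huv')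

lemma cherry_bound (A : Finset (V n)) {Δ : ℕ} (hΔ : ∀ c : V n, deg A c ≤ Δ) :
    ∑ a ∈ A, degD A a * degD A a
      ≤ eD A + 2 * Δ * eD A + 6 * (A.card * A.card) := by
  have expand : ∀ a ∈ A, degD A a * degD A a
      = ∑ u ∈ A, ∑ v ∈ A, (if hammingDist a u = 2 ∧ hammingDist a v = 2 then 1 else 0) := by
    intro a _
    have h1 : degD A a = ∑ u ∈ A, (if hammingDist a u = 2 then 1 else 0) := by
      rw [degD, ← Finset.sum_filter]; simp
    rw [h1, Finset.sum_mul_sum]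
    apply Finset.sum_congr rfl; intro u _
    apply Finset.sum_congr rfl; intro v _
    by_cases h1 : hammingDist a u = 2 <;> by_cases h2 : hammingDist a v = 2 <;>
      simp [h1, h2]
  have swap : ∑ a ∈ A, degD A a * degD A a
      = ∑ u ∈ A, ∑ v ∈ A, (A.filter fun x => hammingDist x u = 2 ∧ hammingDist x v = 2).card := by
    rw [Finset.sum_congr rfl expand, Finset.sum_comm]
    apply Finset.sum_congr rfl; intro u _
    rw [Finset.sum_comm]
    apply Finset.sum_congr rfl; intro v _
    rw [← Finset.sum_filter]
    simp
  rw [swap]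
  have hterm : ∀ u ∈ A,
      (∑ v ∈ A, (A.filter fun x => hammingDist x u = 2 ∧ hammingDist x v = 2).card)
      ≤ degD A u + (2 * Δ * degD A u + 6 * A.card) := by
    intro u hu
    rw [← Finset.add_sum_erase _ _ hu]
    have hdiag : (A.filter fun x => hammingDist x u = 2 ∧ hammingDist x u = 2).card
        = degD A u := by
      rw [degD, ← degD_symm_filter]
      congr 1
      apply Finset.filter_congr
      intro x _; simp
    have hoff : ∑ v ∈ A.erase u,
        (A.filter fun x => hammingDist x u = 2 ∧ hammingDist x v = 2).card
        ≤ 2 * Δ * degD A u + 6 * A.card := by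
      calc ∑ v ∈ A.erase u, (A.filter fun x => hammingDist x u = 2 ∧ hammingDist x v = 2).card
          ≤ ∑ v ∈ A.erase u, (if hammingDist u v = 2 then 2 * Δ else 6) := by
            apply Finset.sum_le_sum
            intro v hv
            have huv : u ≠ v := fun he => (Finset.mem_erase.mp hv).1 he.symm
            by_cases hd : hammingDist u v = 2
            · simp only [hd, if_true]
              exact coD_dist2 hΔ hd
            · simp only [hd, if_false]
              exact coD_le_six huv hd
        _ ≤ 2 * Δ * degD A u + 6 * A.card := by
            rw [Finset.sum_ite, Finset.sum_const, Finset.sum_const, smul_eq_mul, smul_eq_mul]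
            have c1 : ((A.erase u).filter fun v => hammingDist u v = 2).card ≤ degD A u := by
              apply Finset.card_le_card
              exact Finset.filter_subset_filter _ (Finset.erase_subset u A)
            have c2 : ((A.erase u).filter fun v => ¬hammingDist u v = 2).card ≤ A.card := by
              apply Finset.card_le_card
              exact le_trans (Finset.filter_subset _ _) (Finset.erase_subset u A)
            calc _ ≤ degD A u * (2*Δ) + A.card * 6 := by
                  apply Nat.add_le_add <;> apply Nat.mul_le_mul_right <;> assumption
              _ = 2 * Δ * degD A u + 6 * A.card := by ring
    omega
  calc _ ≤ ∑ u ∈ A, (degD A u + (2 * Δ * degD A u + 6 * A.card)) := Finset.sum_le_sum hterm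
    _ = eD A + 2 * Δ * eD A + 6 * (A.card * A.card) := by
        rw [Finset.sum_add_distrib, Finset.sum_add_distrib, Finset.sum_const, smul_eq_mul,
          ← Finset.mul_sum, ← eD]
        ring

end HSCore

namespace HSCore
variable {n : ℕ}

/-- boundary of a sub-star is large -/
lemma star_boundary (A : Finset (V n)) (w : V n) :
    n.choose 2 ≤ ((Nf w ∩ A).biUnion Nf).card + (n - (Nf w ∩ A).card).choose 2 := by
  classical
  set B := Nf w ∩ A with hB
  set J : Finset (Fin n) := Finset.univ.filter (fun i => flipS w {i} ∉ B) with hJ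
  have hJc : J.card = n - B.card := by
    have hsplit : (Finset.univ.filter (fun i => flipS w {i} ∈ B)).card + J.card = n := by
      have := Finset.card_filter_add_card_filter_not
        (s := (Finset.univ : Finset (Fin n))) (p := fun i => flipS w {i} ∈ B)
      simpa using this
    have himg : (Finset.univ.filter (fun i => flipS w {i} ∈ B)).image (fun i => flipS w {i})
        = B := by
      apply Finset.Subset.antisymm
      · intro x hx
        rw [Finset.mem_image] at hx
        obtain ⟨i, hi, rfl⟩ := hx
        exact (Finset.mem_filter.mp hi).2
      · intro b hb
        have hbNf : b ∈ Nf w := (Finset.mem_inter.mp hb).1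
        obtain ⟨i, hi⟩ := Finset.card_eq_one.mp (mem_Nf.mp hbNf)
        have hbeq : b = flipS w {i} := by rw [← flipS_Dd b w, hi]
        refine Finset.mem_image.mpr ⟨i, Finset.mem_filter.mpr ⟨Finset.mem_univ i, ?_⟩, hbeq.symm⟩
        rw [← hbeq]; exact hb
    have hinj : Function.Injective (fun i : Fin n => flipS w {i}) := by
      intro i j hij
      have := congrArg (fun x => Dd x w) hij
      simp only [Dd_flipS] at this
      exact Finset.singleton_injective this
    have hcard : (Finset.univ.filter (fun i => flipS w {i} ∈ B)).card = B.card := by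
      have h5 := Finset.card_image_of_injective
        (Finset.univ.filter (fun i => flipS w {i} ∈ B)) hinj
      rw [himg] at h5
      exact h5.symm
    omega
  have hsub : ((Finset.univ : Finset (Fin n)).powersetCard 2 \ J.powersetCard 2).image (flipS w)
      ⊆ B.biUnion Nf := by
    intro x hx
    rw [Finset.mem_image] at hx
    obtain ⟨S, hS, rfl⟩ := hx
    rw [Finset.mem_sdiff, Finset.mem_powersetCard] at hS
    obtain ⟨⟨-, hS2⟩, hSJ⟩ := hS
    have : ¬ S ⊆ J := fun hc => hSJ (Finset.mem_powersetCard.mpr ⟨hc, hS2⟩)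
    obtain ⟨i, hiS, hiJ⟩ := Finset.not_subset.mp this
    have hib : flipS w {i} ∈ B := by
      rw [hJ] at hiJ
      simp only [Finset.mem_filter, Finset.mem_univ, true_and, not_not] at hiJ
      exact hiJ
    apply Finset.mem_biUnion.mpr ⟨flipS w {i}, hib, ?_⟩
    rw [mem_Nf]
    have hd : Dd (flipS w S) (flipS w {i})
        = symmDiff (Dd (flipS w S) w) (Dd w (flipS w {i})) := Dd_symmDiff _ w _
    have h1 : Dd (flipS w S) w = S := Dd_flipS w S
    have h2 : Dd w (flipS w {i}) = {i} := by rw [Dd_comm]; exact Dd_flipS w {i}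
    rw [h1, h2, symmDiff_singleton_mem' hiS] at hd
    rw [hd, Finset.card_erase_of_mem hiS, hS2]
  have hcard2 : (((Finset.univ : Finset (Fin n)).powersetCard 2 \ J.powersetCard 2).image
      (flipS w)).card = n.choose 2 - (n - B.card).choose 2 := by
    rw [Finset.card_image_of_injective _ (flipS_inj w), Finset.card_sdiff_of_subset
      (Finset.powersetCard_mono (Finset.subset_univ J)), Finset.card_powersetCard,
      Finset.card_powersetCard, Finset.card_univ, Fintype.card_fin, hJc]
  have hle : n.choose 2 - (n - B.card).choose 2 ≤ (B.biUnion Nf).card := by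
    rw [← hcard2]; exact Finset.card_le_card hsub
  have hmono : (n - B.card).choose 2 ≤ n.choose 2 :=
    Nat.choose_le_choose 2 (Nat.sub_le n B.card)
  omega

/-- the two boundaries overlap little -/
lemma cross_bound (A : Finset (V n)) (w : V n) :
    (((Nf w ∩ A).biUnion Nf) ∩ ((A \ Nf w).biUnion Nf)).card ≤ 6 * (A \ Nf w).card := by
  classical
  set B := Nf w ∩ A with hB
  set K := A \ Nf w with hK
  have hsub : (B.biUnion Nf) ∩ (K.biUnion Nf) ⊆ K.biUnion (fun a => Nf a ∩ B.biUnion Nf) := by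
    intro x hx
    rw [Finset.mem_inter] at hx
    obtain ⟨a, ha, hxa⟩ := Finset.mem_biUnion.mp hx.2
    exact Finset.mem_biUnion.mpr ⟨a, ha, Finset.mem_inter.mpr ⟨hxa, hx.1⟩⟩
  calc _ ≤ ∑ a ∈ K, (Nf a ∩ B.biUnion Nf).card :=
        le_trans (Finset.card_le_card hsub) Finset.card_biUnion_le
    _ ≤ 6 * K.card := by
        rw [mul_comm, ← smul_eq_mul]
        apply Finset.sum_le_card_nsmul
        intro a ha
        have haw : hammingDist a w ≠ 1 := by
          intro hc
          have : a ∈ Nf w := mem_Nf.mpr hc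
          exact (Finset.mem_sdiff.mp (hK ▸ ha)).2 this
        have hsub2 : Nf a ∩ B.biUnion Nf ⊆ B.biUnion (fun b => Nf a ∩ Nf b) := by
          intro x hx
          rw [Finset.mem_inter] at hx
          obtain ⟨b, hb, hxb⟩ := Finset.mem_biUnion.mp hx.2
          exact Finset.mem_biUnion.mpr ⟨b, hb, Finset.mem_inter.mpr ⟨hx.1, hxb⟩⟩
        calc (Nf a ∩ B.biUnion Nf).card ≤ ∑ b ∈ B, (Nf a ∩ Nf b).card :=
              le_trans (Finset.card_le_card hsub2) Finset.card_biUnion_le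
          _ ≤ ∑ b ∈ B, (if hammingDist a b = 2 then 2 else 0) := by
              apply Finset.sum_le_sum
              intro b hb
              have hab : a ≠ b := by
                intro he
                have : b ∈ Nf w := (Finset.mem_inter.mp hb).1
                exact (Finset.mem_sdiff.mp (hK ▸ ha)).2 (he ▸ this)
              by_cases hd : hammingDist a b = 2
              · simp only [hd, if_true]; exact inter_Nf_card hab
              · simp only [hd, if_false]
                rw [inter_Nf_empty hab hd]; simp
          _ = 2 * (B.filter fun b => hammingDist a b = 2).card := by
              rw [← Finset.sum_filter, Finset.sum_const, smul_eq_mul, mul_comm]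
          _ ≤ 2 * ((Nf w).filter fun b => hammingDist a b = 2).card := by
              apply Nat.mul_le_mul_left
              apply Finset.card_le_card
              apply Finset.filter_subset_filter
              rw [hB]; exact Finset.inter_subset_left
          _ ≤ 6 := by
              have := cross_le_three (a := a) (w := w) haw
              omega

end HSCore

namespace HSCore
variable {n : ℕ}

set_option maxHeartbeats 2000000 in
theorem main_finset (A : Finset (V n)) (s' : ℝ) (hcard : A.card = n)
    (hn : (10^6 : ℝ) ≤ (n : ℝ)) (hs1 : 1 ≤ s') (hsn : s' ≤ (n : ℝ)/1000)
    (hN : (((A.biUnion Nf).card : ℕ) : ℝ) ≤ (n.choose 2 : ℝ) + n * s') :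
    ∃ w : V n, (n : ℝ) - 100 * s' ≤ ((Nf w ∩ A).card : ℝ) := by
  classical
  have hVne : (Finset.univ : Finset (V n)).Nonempty :=
    ⟨fun _ => false, Finset.mem_univ _⟩
  obtain ⟨w, -, hwmax⟩ := Finset.exists_max_image Finset.univ (deg A) hVne
  have hwmax' : ∀ c : V n, deg A c ≤ deg A w := fun c => hwmax c (Finset.mem_univ c)
  refine ⟨w, ?_⟩
  set B := Nf w ∩ A with hB
  set K := A \ Nf w with hK
  have hBcard : deg A w = B.card := rfl
  have hsplit : B.card + K.card = n := by
    rw [hB, hK, Finset.inter_comm, Finset.card_inter_add_card_sdiff, hcard]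
  -- names
  set N := (A.biUnion Nf).card with hNdef
  set E := eD A with hEdef
  set Gb := (B.biUnion Nf).card with hGbdef
  set Gk := (K.biUnion Nf).card with hGkdef
  set k := K.card with hkdef
  -- ℕ facts
  have f2 : n * n ≤ N + E := by
    have := bonferroni A
    rwa [hcard] at this
  have f3 : E ≤ n * n := by
    have := eD_le_sq A
    rwa [hcard] at this
  have f6 : n.choose 2 ≤ Gb + k.choose 2 := by
    have := star_boundary A w
    have hkn : n - B.card = k := by omega
    rwa [hkn] at this
  have f7 : Gb + Gk = N + (((B.biUnion Nf) ∩ (K.biUnion Nf)).card) := by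
    have hBK : B ∪ K = A := by
      rw [hB, hK, Finset.inter_comm]
      exact sup_inf_sdiff A (Nf w)
    have : (B ∪ K).biUnion Nf = (B.biUnion Nf) ∪ (K.biUnion Nf) := by
      ext x
      simp only [Finset.mem_biUnion, Finset.mem_union]
      constructor
      · rintro ⟨v, hv | hv, hxv⟩
        · exact Or.inl ⟨v, hv, hxv⟩
        · exact Or.inr ⟨v, hv, hxv⟩
      · rintro (⟨v, hv, hxv⟩ | ⟨v, hv, hxv⟩)
        · exact ⟨v, Or.inl hv, hxv⟩
        · exact ⟨v, Or.inr hv, hxv⟩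
    rw [hGbdef, hGkdef, ← Finset.card_union_add_card_inter, ← this, hBK]
  have f8 : ((B.biUnion Nf) ∩ (K.biUnion Nf)).card ≤ 6 * k := cross_bound A w
  -- CS / cherry : stage 1
  have f4 : ((E : ℝ))^2 ≤ (n : ℝ) * (E + 2 * (deg A w) * E + 6 * n * n) := by
    have hcs : ((E : ℝ))^2 ≤ (A.card : ℝ) * ∑ a ∈ A, ((degD A a : ℝ))^2 := by
      have h1 : (E : ℝ) = ∑ a ∈ A, ((degD A a : ℝ)) := by
        rw [hEdef, eD]; push_cast; ring
      rw [h1]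
      exact sq_sum_le_card_mul_sum_sq
    have hch : ∑ a ∈ A, ((degD A a : ℝ))^2
        ≤ ((E + 2 * (deg A w) * E + 6 * (A.card * A.card) : ℕ) : ℝ) := by
      have h2 : ∑ a ∈ A, ((degD A a : ℝ))^2
          = ((∑ a ∈ A, degD A a * degD A a : ℕ) : ℝ) := by
        rw [Nat.cast_sum]; apply Finset.sum_congr rfl; intro a _; push_cast; ring
      rw [h2]
      exact_mod_cast cherry_bound A hwmax'
    calc ((E : ℝ))^2 ≤ (A.card : ℝ) * ∑ a ∈ A, ((degD A a : ℝ))^2 := hcs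
      _ ≤ (A.card : ℝ) * ((E + 2 * (deg A w) * E + 6 * (A.card * A.card) : ℕ) : ℝ) := by
          apply mul_le_mul_of_nonneg_left hch (by positivity)
      _ = (n : ℝ) * (E + 2 * (deg A w) * E + 6 * n * n) := by
          rw [hcard]; push_cast; ring
  -- Corradi : stage 2
  have f5 : ((n : ℝ) * k)^2 ≤ (Gk : ℝ) * ((n : ℝ) * k + 2 * k * k) := by
    have h1 := corradi K
    have h2 : (eD K : ℝ) ≤ (k : ℝ) * k := by exact_mod_cast eD_le_sq K
    calc ((n : ℝ) * k)^2 ≤ (Gk : ℝ) * ((n : ℝ) * k + 2 * eD K) := h1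
      _ ≤ (Gk : ℝ) * ((n : ℝ) * k + 2 * k * k) := by
          apply mul_le_mul_of_nonneg_left _ (by positivity)
          nlinarith [h2]
  -- pass to reals
  have hdd : ((deg A w : ℝ)) = (n : ℝ) - k := by
    rw [hBcard]
    have : (B.card : ℝ) + k = n := by exact_mod_cast hsplit
    linarith
  have hchoose : ((n.choose 2 : ℕ) : ℝ) = (n : ℝ) * (n - 1) / 2 := Nat.cast_choose_two (K := ℝ) n
  have hchoosek : ((k.choose 2 : ℕ) : ℝ) ≤ (k : ℝ) * k / 2 := by
    rw [Nat.cast_choose_two]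
    have : (0 : ℝ) ≤ k := by positivity
    nlinarith
  have hN' : (N : ℝ) ≤ (n : ℝ) * (n-1)/2 + n * s' := by rw [← hchoose]; exact hN
  have f2' : (n : ℝ) * n ≤ (N : ℝ) + (E : ℝ) := by exact_mod_cast f2
  have f3' : (E : ℝ) ≤ (n : ℝ) * n := by exact_mod_cast f3
  have f6' : (n : ℝ) * (n-1)/2 ≤ (Gb : ℝ) + (k : ℝ) * k / 2 := by
    have : ((n.choose 2 : ℕ) : ℝ) ≤ (Gb : ℝ) + ((k.choose 2 : ℕ) : ℝ) := by exact_mod_cast f6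
    rw [hchoose] at this
    linarith
  have f78 : (Gb : ℝ) + (Gk : ℝ) ≤ (N : ℝ) + 6 * k := by
    have h7 : ((Gb : ℝ)) + Gk = (N : ℝ) + (((B.biUnion Nf) ∩ (K.biUnion Nf)).card : ℝ) := by
      exact_mod_cast congrArg (fun t : ℕ => (t : ℝ)) f7
    have h8 : ((((B.biUnion Nf) ∩ (K.biUnion Nf)).card : ℕ) : ℝ) ≤ 6 * k := by
      exact_mod_cast f8
    linarith
  -- final arithmetic
  rw [← hBcard]
  rw [hdd] at f4 ⊢
  -- goal : (n:ℝ) - 100*s' ≤ n - k , i.e. k ≤ 100*s'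
  rw [sub_le_sub_iff_left]
  by_contra hcon
  push_neg at hcon
  have hkpos : (100 : ℝ) < (k : ℝ) := lt_of_le_of_lt (by linarith) hcon
  have hnpos : (0 : ℝ) < n := by linarith
  have hkr : (0 : ℝ) ≤ k := by positivity
  have hE_lb : (n : ℝ)*n/2 - n*s' ≤ (E : ℝ) := by linarith
  have hE_lb2 : 0.499 * ((n:ℝ)*n) ≤ (E : ℝ) := by nlinarith [hsn, hnpos]
  -- step A : k ≤ 0.751 n
  have dA : (k : ℝ) ≤ 0.751 * n := by
    by_contra hcA
    push_neg at hcA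
    have hM : 0.000999 * ((n:ℝ)*n) ≤ (E:ℝ) - n - 2*n*((n:ℝ) - k) := by
      nlinarith [hE_lb2, mul_lt_mul_of_pos_left hcA hnpos, hn, hnpos]
    have hprod : (E:ℝ) * ((E:ℝ) - n - 2*n*((n:ℝ) - k)) ≤ 6*(n*n*n) := by nlinarith [f4]
    nlinarith [mul_le_mul hE_lb2 hM (by nlinarith [hE_lb2, hnpos]) (by positivity),
      hn, hnpos, mul_pos hnpos hnpos, mul_pos (mul_pos hnpos hnpos) hnpos]
  -- step B
  have hGk_ub : (Gk : ℝ) ≤ n * s' + 6*k + (k:ℝ)*k/2 := by linarith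
  have key : ((n:ℝ) * k)^2 ≤ (n * s' + 6*k + (k:ℝ)*k/2) * ((n : ℝ) * k + 2 * k * k) := by
    calc ((n:ℝ) * k)^2 ≤ (Gk : ℝ) * ((n : ℝ) * k + 2 * k * k) := f5
      _ ≤ _ := by
        apply mul_le_mul_of_nonneg_right hGk_ub (by positivity)
  have hs'k : s' ≤ (k : ℝ)/100 := by linarith
  nlinarith [key, hs'k, dA, hkpos, hnpos, hn,
    mul_pos hnpos hnpos, mul_pos (mul_pos hnpos hnpos) hnpos,
    mul_le_mul_of_nonneg_right hs'k (le_of_lt (mul_pos (mul_pos hnpos hnpos) (lt_trans (by norm_num) hkpos))),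
    mul_le_mul_of_nonneg_right dA (mul_nonneg (mul_nonneg hkr hkr) (le_of_lt hnpos)),
    mul_le_mul_of_nonneg_right dA (mul_nonneg hkr hkr),
    mul_pos (lt_trans (by norm_num : (0:ℝ) < 100) hkpos) (lt_trans (by norm_num : (0:ℝ) < 100) hkpos)]

end HSCore

namespace HSCore
variable {n : ℕ}
lemma mem_Nf' {u v : V n} : u ∈ Nf v ↔ hammingDist u v = 1 := by simp [Nf]

lemma Q_adj {u v : V n} : (Q n).Adj u v ↔ hammingDist u v = 1 := by
  unfold Q
  rw [SimpleGraph.fromRel_adj]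
  constructor
  · rintro ⟨hne, h | h⟩
    · exact h
    · rw [hammingDist_comm]; exact h
  · intro h
    refine ⟨?_, Or.inl h⟩
    intro he
    rw [he, hammingDist_self] at h
    exact one_ne_zero h.symm

lemma nbhd_coe (v : V n) : nbhd n v = ↑(Nf v) := by
  ext u
  simp only [nbhd, SimpleGraph.mem_neighborSet, Finset.coe_filter, Set.mem_setOf_eq,
    Finset.mem_coe]
  rw [Q_adj, mem_Nf', hammingDist_comm]

lemma nbhdSet_coe (F : Finset (V n)) : nbhdSet n ↑F = ↑(F.biUnion Nf) := by
  ext x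
  simp only [nbhdSet, Set.mem_iUnion, Finset.mem_coe, Finset.mem_biUnion, exists_prop]
  constructor
  · rintro ⟨v, hv, hx⟩
    rw [nbhd_coe] at hx
    exact ⟨v, hv, hx⟩
  · rintro ⟨v, hv, hx⟩
    exact ⟨v, hv, by rw [nbhd_coe]; exact hx⟩

end HSCore
end HSCoreSection

/-- Theorem 1.6 (stability for Harper's theorem for sets of size `n`). -/
theorem harper_stability
    (s : ℕ → ℕ) (hs : Tendsto s atTop atTop)
    (hso : (fun n => (s n : ℝ)) =o[atTop] fun n => (n : ℝ)) :
    ∃ C : ℝ, 0 < C ∧ ∀ᶠ n : ℕ in atTop, ∀ A : Set (V n),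
      A.ncard = n → ((nbhdSet n A).ncard : ℝ) ≤ (n.choose 2 : ℝ) + n * s n →
      ∃ w : V n, (n : ℝ) - C * s n ≤ ((nbhd n w ∩ A).ncard : ℝ) := by
  refine ⟨100, by norm_num, ?_⟩
  have h1 : ∀ᶠ m : ℕ in atTop, 1 ≤ s m := hs.eventually_ge_atTop 1
  have h2 : ∀ᶠ m : ℕ in atTop, ‖(s m : ℝ)‖ ≤ (1/1000 : ℝ) * ‖(m : ℝ)‖ :=
    hso.def (by norm_num)
  have h3 : ∀ᶠ m : ℕ in atTop, (10^6 : ℕ) ≤ m := eventually_ge_atTop _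
  filter_upwards [h1, h2, h3] with m hm1 hm2 hm3
  intro A hAcard hAnbhd
  have hAfin : A.Finite := A.toFinite
  set F := hAfin.toFinset with hF
  have hFcoe : (↑F : Set (V m)) = A := hAfin.coe_toFinset
  have hFcard : F.card = m := by
    rw [← Set.ncard_coe_finset, hFcoe]; exact hAcard
  have hΓ : (((F.biUnion HSCore.Nf).card : ℕ) : ℝ) ≤ (m.choose 2 : ℝ) + m * s m := by
    rw [← Set.ncard_coe_finset, ← HSCore.nbhdSet_coe, hFcoe]
    exact hAnbhd
  have hmr : (10^6 : ℝ) ≤ (m : ℝ) := by exact_mod_cast hm3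
  have hs1 : (1 : ℝ) ≤ (s m : ℝ) := by exact_mod_cast hm1
  have hsn : (s m : ℝ) ≤ (m : ℝ)/1000 := by
    rw [Real.norm_eq_abs, Real.norm_eq_abs, abs_of_nonneg (by positivity),
      abs_of_nonneg (by positivity)] at hm2
    linarith
  obtain ⟨w, hw⟩ := HSCore.main_finset F (s m) hFcard hmr hs1 hsn hΓ
  refine ⟨w, ?_⟩
  have : nbhd m w ∩ A = ↑(HSCore.Nf w ∩ F) := by
    rw [Finset.coe_inter, HSCore.nbhd_coe, hFcoe]
  rw [this, Set.ncard_coe_finset]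
  exact hw


end
end
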